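/- arXiv:1412.3080 — 9 statements merged into one kernel-verified Lean document; each statement's English description precedes it below -/
import Mathlib

section
/- Let r be a positive integer and let x_1,...,x_s, y_1,...,y_s, X, Y be real numbers such that r < x_i ≤ y_i for all i, Y ≥ max(x_1,...,x_s), and X·∏x_i < Y·∏y_i. Then (X−r)·∏(x_i−r) < (Y−r)·∏(y_i−r). -/
/-- The Schemmel totient function of order `r` (multiplicative, with
`S r (p^a) = p^(a-1) * (p - r)`; note `p - r = 0` in `ℕ` when `p ≤ r`). -/
def S (r n : ℕ) : ℕ := ∏ q ∈ n.primeFactors, q ^ (n.factorization q - 1) * (q - r)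

/-- `b r` is the number of primes `≤ r`. -/
def b (r : ℕ) : ℕ := ((Finset.range (r + 1)).filter Nat.Prime).card

/-- `p i` is the `i`-th prime (`p 1 = 2`, `p 2 = 3`, ...). -/
noncomputable def p (i : ℕ) : ℕ := Nat.nth Nat.Prime (i - 1)

/-- `n` is a sparsely Schemmel totient number of order `r`. -/
def SST (r n : ℕ) : Prop := 0 < S r n ∧ ∀ m : ℕ, n < m → 0 < S r m → S r n < S r m

/-- Jacobsthal function: the smallest `a` such that every `a` consecutive
integers contain one coprime to `N`. -/
noncomputable def J (N : ℕ) : ℕ := sInf {a : ℕ | ∀ x : ℕ, ∃ y ∈ Finset.Ico x (x + a), Nat.Coprime y N}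

/-- `Pk k n` is the `k`-th largest prime divisor of `n` (or `0` if `ω(n) < k`). -/
def Pk (k n : ℕ) : ℕ := ((n.primeFactors.sort (· ≤ ·)).reverse).getD (k - 1) 0

/-- `Qk r k n` is the `k`-th smallest prime greater than `r` not dividing `n`. -/
noncomputable def Qk (r k n : ℕ) : ℕ := Nat.nth (fun q : ℕ => q.Prime ∧ r < q ∧ ¬ q ∣ n) (k - 1)

/-- `Rn n` is `n` divided by the product of its distinct prime factors. -/
def Rn (n : ℕ) : ℕ := n / ∏ q ∈ n.primeFactors, q

lemma aux_sst (r : ℝ) (hr : 0 ≤ r) : ∀ (s : ℕ) (x y : Fin s → ℝ) (Z W : ℝ),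
    (∀ i, r < x i ∧ x i ≤ y i) → (∀ i, x i * W ≤ Z) → 0 < W →
    (Z * ∏ i, y i - r * W * ∏ i, x i) * ∏ i, (x i - r) ≤
      (Z - r * W) * (∏ i, (y i - r)) * ∏ i, x i := by
  intro s
  induction s with
  | zero => intro x y Z W _ _ _; simp
  | succ s ih =>
    intro x y Z W hxy hZ hW
    have hxs : (0:ℝ) < x (Fin.last s) := lt_of_le_of_lt hr (hxy _).1
    have hys : x (Fin.last s) ≤ y (Fin.last s) := (hxy _).2
    have hZ0 : 0 < Z := lt_of_lt_of_le (mul_pos hxs hW) (hZ _)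
    have key := ih (x ∘ Fin.castSucc) (y ∘ Fin.castSucc) (Z * y (Fin.last s))
      (W * x (Fin.last s)) (fun i => hxy _)
      (fun i => by
        have h1 := hZ i.castSucc
        have := (hxy i.castSucc).1
        simp only [Function.comp_apply]
        nlinarith [hZ0, hxs, hys])
      (mul_pos hW hxs)
    simp only [Function.comp_apply] at key
    rw [Fin.prod_univ_castSucc x, Fin.prod_univ_castSucc y,
      Fin.prod_univ_castSucc (fun i => x i - r), Fin.prod_univ_castSucc (fun i => y i - r)]
    set A := ∏ i : Fin s, x i.castSucc with hA
    set B := ∏ i : Fin s, y i.castSucc with hB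
    set C := ∏ i : Fin s, (x i.castSucc - r) with hC
    set D := ∏ i : Fin s, (y i.castSucc - r) with hD
    have hApos : 0 < A := Finset.prod_pos fun i _ => lt_of_le_of_lt hr (hxy _).1
    have hDpos : 0 < D := Finset.prod_pos fun i _ => by
      have h1 := (hxy i.castSucc).1
      have h2 := (hxy i.castSucc).2
      linarith
    have hxsr : (0:ℝ) < x (Fin.last s) - r := by linarith [(hxy (Fin.last s)).1]
    have step : (Z * y (Fin.last s) - r * W * x (Fin.last s)) * (x (Fin.last s) - r) ≤
        (Z - r * W) * (y (Fin.last s) - r) * x (Fin.last s) := by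
      have h1 := hZ (Fin.last s)
      nlinarith [mul_nonneg (mul_nonneg hr (by linarith : (0:ℝ) ≤ Z - W * x (Fin.last s)))
        (by linarith : (0:ℝ) ≤ y (Fin.last s) - x (Fin.last s))]
    calc (Z * (B * y (Fin.last s)) - r * W * (A * x (Fin.last s))) * (C * (x (Fin.last s) - r))
        = ((Z * y (Fin.last s) * B - r * (W * x (Fin.last s)) * A) * C) * (x (Fin.last s) - r) := by
          ring
      _ ≤ ((Z * y (Fin.last s) - r * (W * x (Fin.last s))) * D * A) * (x (Fin.last s) - r) :=
          mul_le_mul_of_nonneg_right key hxsr.le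
      _ = ((Z * y (Fin.last s) - r * W * x (Fin.last s)) * (x (Fin.last s) - r)) * (D * A) := by
          ring
      _ ≤ ((Z - r * W) * (y (Fin.last s) - r) * x (Fin.last s)) * (D * A) :=
          mul_le_mul_of_nonneg_right step (mul_pos hDpos hApos).le
      _ = (Z - r * W) * (D * (y (Fin.last s) - r)) * (A * x (Fin.last s)) := by ring

theorem stmt0 (r : ℕ) (hr : 0 < r) (s : ℕ) (hs : 1 ≤ s)
    (x y : Fin s → ℝ) (X Y : ℝ)
    (hxy : ∀ i, (r : ℝ) < x i ∧ x i ≤ y i)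
    (hY : ∀ i, x i ≤ Y)
    (h : X * ∏ i, x i < Y * ∏ i, y i) :
    (X - r) * ∏ i, (x i - r) < (Y - r) * ∏ i, (y i - r) := by
  have hr0 : (0:ℝ) ≤ (r:ℝ) := Nat.cast_nonneg r
  have hPx : 0 < ∏ i, x i := Finset.prod_pos fun i _ => lt_of_le_of_lt hr0 (hxy i).1
  have hxr : 0 < ∏ i, (x i - (r:ℝ)) := Finset.prod_pos fun i _ => by
    linarith [(hxy i).1]
  have key := aux_sst (r:ℝ) hr0 s x y Y 1 hxy (fun i => by simpa using hY i) one_pos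
  simp only [mul_one] at key
  have strict : (X * ∏ i, x i - (r:ℝ) * ∏ i, x i) * ∏ i, (x i - (r:ℝ)) <
      (Y * ∏ i, y i - (r:ℝ) * ∏ i, x i) * ∏ i, (x i - (r:ℝ)) :=
    mul_lt_mul_of_pos_right (by linarith) hxr
  have final : ((X - r) * ∏ i, (x i - (r:ℝ))) * ∏ i, x i <
      ((Y - r) * ∏ i, (y i - (r:ℝ))) * ∏ i, x i := by
    calc ((X - r) * ∏ i, (x i - (r:ℝ))) * ∏ i, x i
        = (X * ∏ i, x i - (r:ℝ) * ∏ i, x i) * ∏ i, (x i - (r:ℝ)) := by ring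
      _ < (Y * ∏ i, y i - (r:ℝ) * ∏ i, x i) * ∏ i, (x i - (r:ℝ)) := strict
      _ ≤ (Y - r) * (∏ i, (y i - (r:ℝ))) * ∏ i, x i := key
  exact lt_of_mul_lt_mul_right final hPx.le
end

section
/- For any positive integer r and any n with S_r(n) > 0, S_r(n) ≥ ∏_{i=1}^{ω(n)} (p_{b(r)+i} − r), where ω(n) is the number of distinct prime factors of n. -/
private theorem stmt2_aux (r n : ℕ) (hr : 0 < r)
    (hn : 0 < ∏ q ∈ n.primeFactors, q ^ (n.factorization q - 1) * (q - r)) :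
    ∏ i ∈ Finset.range n.primeFactors.card,
      (Nat.nth Nat.Prime (((Finset.range (r + 1)).filter Nat.Prime).card + i + 1 - 1) - r) ≤
      ∏ q ∈ n.primeFactors, q ^ (n.factorization q - 1) * (q - r) := by
  classical
  set T := n.primeFactors with hT
  set B := ((Finset.range (r + 1)).filter Nat.Prime).card with hB
  have hB' : B = Nat.count Nat.Prime (r + 1) := by
    rw [hB, Nat.count_eq_card_filter_range]
  have h0 : ∀ q ∈ T, q ^ (n.factorization q - 1) * (q - r) ≠ 0 :=
    Finset.prod_ne_zero_iff.mp hn.ne'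
  have hprime : ∀ q ∈ T, q.Prime := fun q hq => Nat.prime_of_mem_primeFactors hq
  have hrq : ∀ q ∈ T, r < q := by
    intro q hq
    have := h0 q hq
    have h1 : q - r ≠ 0 := by
      intro h; rw [h, Nat.mul_zero] at this; exact this rfl
    omega
  -- Step 1: ∏ (q - r) ≤ S r n
  have step1 : ∏ q ∈ T, (q - r) ≤ ∏ q ∈ T, q ^ (n.factorization q - 1) * (q - r) := by
    apply Finset.prod_le_prod'
    intro q hq
    have : 0 < q ^ (n.factorization q - 1) := Nat.pow_pos (hprime q hq).pos
    exact Nat.le_mul_of_pos_left _ this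
  refine le_trans ?_ step1
  -- Step 2
  set k := T.card with hk
  set e := T.orderEmbOfFin hk.symm with he
  have hmem : ∀ i : Fin k, e i ∈ T := fun i => Finset.orderEmbOfFin_mem T hk.symm i
  set c : Fin k → ℕ := fun i => Nat.count Nat.Prime (e i) with hc
  have hnthc : ∀ i : Fin k, Nat.nth Nat.Prime (c i) = e i := fun i =>
    Nat.nth_count (hprime _ (hmem i))
  have hcmono : StrictMono c := by
    intro i j hij
    have hij' : e i < e j := (T.orderEmbOfFin hk.symm).strictMono hij
    have h1 : Nat.count Nat.Prime (e i) + 1 = Nat.count Nat.Prime (e i + 1) := by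
      rw [Nat.count_succ, if_pos (hprime _ (hmem i))]
    have h2 : Nat.count Nat.Prime (e i + 1) ≤ Nat.count Nat.Prime (e j) :=
      Nat.count_monotone _ hij'
    simp only [hc]; omega
  have hc0 : ∀ m : ℕ, ∀ hm : m < k, B + m ≤ c ⟨m, hm⟩ := by
    intro m
    induction m with
    | zero =>
      intro hm
      have h1 : r + 1 ≤ e ⟨0, hm⟩ := hrq _ (hmem _)
      have h2 := Nat.count_monotone Nat.Prime h1
      simp only [hc, hB']
      omega
    | succ m ih =>
      intro hm
      have hm' : m < k := Nat.lt_of_succ_lt hm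
      have h1 : c ⟨m, hm'⟩ < c ⟨m + 1, hm⟩ := hcmono (by simp [Fin.lt_def])
      have h2 := ih hm'
      omega
  -- rewrite RHS as product over Fin k
  have hrhs : ∏ q ∈ T, (q - r) = ∏ i : Fin k, (e i - r) := by
    refine (Finset.prod_bij (fun (i : Fin k) _ => e i) (fun i _ => hmem i)
      (fun i _ j _ hij => (T.orderEmbOfFin hk.symm).injective hij) ?_ (fun i _ => rfl)).symm
    intro q hq
    have : q ∈ Set.range (T.orderEmbOfFin hk.symm) := by
      rw [Finset.range_orderEmbOfFin]; exact hq
    obtain ⟨i, hi⟩ := this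
    exact ⟨i, Finset.mem_univ i, hi⟩
  rw [hrhs, ← Fin.prod_univ_eq_prod_range]
  apply Finset.prod_le_prod'
  intro i _
  have h1 : B + (i : ℕ) + 1 - 1 = B + (i : ℕ) := by omega
  rw [h1]
  have h2 : Nat.nth Nat.Prime (B + (i : ℕ)) ≤ Nat.nth Nat.Prime (c i) :=
    (Nat.nth_le_nth Nat.infinite_setOf_prime).mpr (by simpa using hc0 i i.isLt)
  rw [hnthc i] at h2
  omega

theorem stmt2 (r n : ℕ) (hr : 0 < r) (hn : 0 < S r n) :
    ∏ i ∈ Finset.range n.primeFactors.card, (p (b r + i + 1) - r) ≤ S r n :=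
  stmt2_aux r n hr hn
end

section
/- For every positive integer j not in {1, 2, 4}, the ratio of consecutive primes satisfies p_{j+1}/p_j ≤ 7/5. -/
set_option maxHeartbeats 1000000

open Finset ArithmeticFunction Real in
noncomputable def TT (N : ℕ) : ℝ := ∑ n ∈ Finset.Icc 1 N, Real.log n
open Finset ArithmeticFunction Real in
noncomputable def psi (N : ℕ) : ℝ := ∑ n ∈ Finset.Icc 1 N, Λ n
noncomputable def EE (N : ℕ) : ℝ := TT N - TT (N/2) - TT (N/3) - TT (N/5) + TT (N/30)
noncomputable def CA : ℝ := Real.log 2 / 2 + Real.log 3 / 3 + Real.log 5 / 5 - Real.log 30 / 30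
open Finset ArithmeticFunction Real in
noncomputable def Err (M : ℕ) : ℝ := ∑ n ∈ (Finset.Icc 1 M).filter (fun n => ¬ n.Prime), Λ n
def Good (P : ℕ) : Prop := ∃ q : ℕ, q.Prime ∧ P < q ∧ 5 * q ≤ 7 * P

section ChebyshevDev
open Finset ArithmeticFunction Real




lemma TT_eq (N : ℕ) : TT N = ∑ d ∈ Finset.Icc 1 N, Λ d * (N / d : ℕ) := by
  have h1 : ∀ n ∈ Finset.Icc 1 N, Real.log n = ∑ d ∈ Finset.Icc 1 N, if d ∣ n then Λ d else 0 := by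
    intro n hn
    simp only [Finset.mem_Icc] at hn
    rw [← ArithmeticFunction.vonMangoldt_sum (n := n), ← Finset.sum_filter]
    apply Finset.sum_congr _ (fun _ _ => rfl)
    ext d
    simp only [Finset.mem_filter, Finset.mem_Icc, Nat.mem_divisors]
    constructor
    · rintro ⟨hdvd, hne⟩
      exact ⟨⟨Nat.one_le_iff_ne_zero.2 (fun h => hne (by simp [h] at hdvd ⊢; omega)),
        le_trans (Nat.le_of_dvd (by omega) hdvd) hn.2⟩, hdvd⟩
    · rintro ⟨⟨h1d, h2d⟩, hdvd⟩; exact ⟨hdvd, by omega⟩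
  rw [TT, Finset.sum_congr rfl h1, Finset.sum_comm]
  refine Finset.sum_congr rfl fun d hd => ?_
  rw [← Finset.sum_filter]
  rw [Finset.sum_const, nsmul_eq_mul, mul_comm]
  congr 1
  have : Finset.Icc 1 N = Finset.Ioc 0 N := by rfl
  rw [this]
  exact_mod_cast congrArg (Nat.cast : ℕ → ℝ) (Nat.Ioc_filter_dvd_card_eq_div N d)


lemma log_ge_aux {x : ℝ} (hx : 0 < x) : 1 - 1/x ≤ Real.log x := by
  have h := Real.log_le_sub_one_of_pos (x := 1/x) (by positivity)
  rw [Real.log_div one_ne_zero (ne_of_gt hx), Real.log_one] at h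
  have : 1/x - 1 ≥ 0 - Real.log x := by linarith
  linarith [h]

lemma TT_succ (N : ℕ) : TT (N+1) = TT N + Real.log (N+1) := by
  rw [TT, TT, Finset.sum_Icc_succ_top (by omega : 1 ≤ N+1)]
  push_cast
  ring_nf

lemma TT_lb : ∀ N : ℕ, 1 ≤ N → (N:ℝ)*Real.log N - N + 1 ≤ TT N := by
  intro N
  induction N with
  | zero => intro h; omega
  | succ n ih =>
    intro _
    rcases Nat.eq_zero_or_pos n with rfl | hn
    · simp [TT]
    · have h1 := ih hn
      rw [TT_succ]
      have hn1 : (0:ℝ) < n := by exact_mod_cast hn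
      have key : (n:ℝ) * Real.log ((n+1)/n) ≤ 1 := by
        have := Real.log_le_sub_one_of_pos (x := ((n:ℝ)+1)/n) (by positivity)
        have h2 : ((n:ℝ)+1)/n - 1 = 1/n := by field_simp; ring
        rw [h2] at this
        calc (n:ℝ) * Real.log ((n+1)/n) ≤ (n:ℝ) * (1/n) := by
              apply mul_le_mul_of_nonneg_left this (le_of_lt hn1)
          _ = 1 := by field_simp
      have hlogdiv : Real.log (((n:ℝ)+1)/n) = Real.log ((n:ℝ)+1) - Real.log n :=
        Real.log_div (by positivity) (ne_of_gt hn1)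
      rw [hlogdiv] at key
      push_cast
      nlinarith [key, h1]

lemma TT_ub : ∀ N : ℕ, 1 ≤ N → TT N ≤ (N:ℝ)*Real.log N - N + 1 + Real.log N := by
  intro N
  induction N with
  | zero => intro h; omega
  | succ n ih =>
    intro _
    rcases Nat.eq_zero_or_pos n with rfl | hn
    · simp [TT]
    · have h1 := ih hn
      rw [TT_succ]
      have hn1 : (0:ℝ) < n := by exact_mod_cast hn
      have key : 1 ≤ ((n:ℝ)+1) * Real.log ((n+1)/n) := by
        have := log_ge_aux (x := ((n:ℝ)+1)/n) (by positivity)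
        have h2 : 1 - 1/(((n:ℝ)+1)/n) = 1/((n:ℝ)+1) := by
          rw [one_div_div]; field_simp; ring
        rw [h2] at this
        calc (1:ℝ) = ((n:ℝ)+1) * (1/((n:ℝ)+1)) := by field_simp
          _ ≤ ((n:ℝ)+1) * Real.log ((n+1)/n) := by
              apply mul_le_mul_of_nonneg_left this (by positivity)
      have hlogdiv : Real.log (((n:ℝ)+1)/n) = Real.log ((n:ℝ)+1) - Real.log n :=
        Real.log_div (by positivity) (ne_of_gt hn1)
      rw [hlogdiv] at key
      push_cast
      nlinarith [key, h1]



lemma TT_div_eq (N k : ℕ) :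
    TT (N/k) = ∑ d ∈ Finset.Icc 1 N, Λ d * ((N/d)/k : ℕ) := by
  have h1 : TT (N/k) = ∑ d ∈ Finset.Icc 1 N, Λ d * ((N/k)/d : ℕ) := by
    rw [TT_eq]
    apply Finset.sum_subset (Finset.Icc_subset_Icc_right (Nat.div_le_self N k))
    intro d hd hnd
    simp only [Finset.mem_Icc] at hd hnd
    have : (N/k)/d = 0 := Nat.div_eq_of_lt (by omega)
    rw [this]; simp
  rw [h1]
  refine Finset.sum_congr rfl fun d hd => ?_
  rw [Nat.div_div_eq_div_mul, Nat.div_div_eq_div_mul, mul_comm d k]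

lemma EE_eq (N : ℕ) : EE N = ∑ d ∈ Finset.Icc 1 N, Λ d *
    ((N/d : ℕ) + ((N/d)/30 : ℕ) - (((N/d)/2 : ℕ) + ((N/d)/3 : ℕ) + ((N/d)/5 : ℕ)) : ℝ) := by
  rw [EE, TT_eq, TT_div_eq N 2, TT_div_eq N 3, TT_div_eq N 5, TT_div_eq N 30]
  rw [← Finset.sum_sub_distrib, ← Finset.sum_sub_distrib, ← Finset.sum_sub_distrib,
    ← Finset.sum_add_distrib]
  refine Finset.sum_congr rfl fun d hd => by ring

lemma EE_le_psi (N : ℕ) : EE N ≤ psi N := by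
  rw [EE_eq, psi]
  apply Finset.sum_le_sum
  intro d hd
  have h := ArithmeticFunction.vonMangoldt_nonneg (n := d)
  have h1 : ((N/d : ℕ) + ((N/d)/30 : ℕ) - (((N/d)/2 : ℕ) + ((N/d)/3 : ℕ) + ((N/d)/5 : ℕ)) : ℝ) ≤ 1 := by
    have h0 := (by omega : N/d + (N/d)/30 ≤ (N/d)/2 + (N/d)/3 + (N/d)/5 + 1)
    have := (Nat.cast_le (α := ℝ)).2 h0
    push_cast at this ⊢
    linarith
  nlinarith [h, h1]

lemma psi_sub_le_EE (N : ℕ) : psi N - psi (N/6) ≤ EE N := by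
  have hsplit : psi (N/6) + ∑ n ∈ Finset.Ioc (N/6) N, Λ n = psi N := by
    rw [psi, psi, (rfl : Finset.Icc 1 (N/6) = Finset.Ioc 0 (N/6)),
      (rfl : Finset.Icc 1 N = Finset.Ioc 0 N)]
    exact Finset.sum_Ioc_consecutive _ (Nat.zero_le _) (Nat.div_le_self N 6)
  have key : ∑ n ∈ Finset.Ioc (N/6) N, Λ n ≤ EE N := by
    rw [EE_eq]
    rw [← Finset.sum_filter_add_sum_filter_not (Finset.Icc 1 N) (fun d => N/6 < d)]
    have e1 : Finset.Ioc (N/6) N = (Finset.Icc 1 N).filter (fun d => N/6 < d) := by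
      ext d
      simp only [Finset.mem_Ioc, Finset.mem_filter, Finset.mem_Icc]
      omega
    rw [e1]
    have h2 : (0:ℝ) ≤ ∑ d ∈ (Finset.Icc 1 N).filter (fun d => ¬ N/6 < d), Λ d *
        ((N/d : ℕ) + ((N/d)/30 : ℕ) - (((N/d)/2 : ℕ) + ((N/d)/3 : ℕ) + ((N/d)/5 : ℕ)) : ℝ) := by
      apply Finset.sum_nonneg
      intro d hd
      apply mul_nonneg ArithmeticFunction.vonMangoldt_nonneg
      have h0 := (by omega : (N/d)/2 + (N/d)/3 + (N/d)/5 ≤ N/d + (N/d)/30)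
      have := (Nat.cast_le (α := ℝ)).2 h0
      push_cast at this ⊢
      linarith
    have h3 : ∑ d ∈ (Finset.Icc 1 N).filter (fun d => N/6 < d), Λ d ≤
        ∑ d ∈ (Finset.Icc 1 N).filter (fun d => N/6 < d), Λ d *
        ((N/d : ℕ) + ((N/d)/30 : ℕ) - (((N/d)/2 : ℕ) + ((N/d)/3 : ℕ) + ((N/d)/5 : ℕ)) : ℝ) := by
      apply Finset.sum_le_sum
      intro d hd
      simp only [Finset.mem_filter, Finset.mem_Icc] at hd
      have hd0 : 0 < d := hd.1.1
      have hq1 : 1 ≤ N/d := (Nat.one_le_div_iff hd0).2 hd.1.2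
      have hq5 : N/d ≤ 5 := by
        by_contra hcon
        push_neg at hcon
        have h6 : 6 ≤ N/d := hcon
        have h6' : 6 * d ≤ N := (Nat.le_div_iff_mul_le hd0).1 h6
        have : d ≤ N/6 := (Nat.le_div_iff_mul_le (by norm_num)).2 (by omega)
        omega
      have heq : N/d + (N/d)/30 = (N/d)/2 + (N/d)/3 + (N/d)/5 + 1 := by omega
      have hc := congrArg (Nat.cast : ℕ → ℝ) heq
      push_cast at hc
      nlinarith [ArithmeticFunction.vonMangoldt_nonneg (n := d)]
    linarith
  linarith



-- F(b) - F(a) between (b-a) log a and (b-a) log b, for 1 ≤ a ≤ b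
lemma F_diff_ub {a b : ℝ} (ha : 1 ≤ a) (hab : a ≤ b) :
    b * Real.log b - b - (a * Real.log a - a) ≤ (b - a) * Real.log b := by
  have ha0 : 0 < a := by linarith
  have hb0 : 0 < b := by linarith
  -- reduces to a * log(b/a) ≤ b - a
  have h := Real.log_le_sub_one_of_pos (x := b/a) (by positivity)
  have hlog : Real.log (b/a) = Real.log b - Real.log a := Real.log_div (ne_of_gt hb0) (ne_of_gt ha0)
  rw [hlog] at h
  have h2 : a * (Real.log b - Real.log a) ≤ a * (b/a - 1) := by
    apply mul_le_mul_of_nonneg_left h (le_of_lt ha0)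
  have h3 : a * (b/a - 1) = b - a := by field_simp
  nlinarith [h2]

lemma F_diff_lb {a b : ℝ} (ha : 1 ≤ a) (hab : a ≤ b) :
    (b - a) * Real.log a ≤ b * Real.log b - b - (a * Real.log a - a) := by
  have ha0 : 0 < a := by linarith
  have hb0 : 0 < b := by linarith
  -- reduces to b * log(b/a) ≥ b - a
  have h := log_ge_aux (x := b/a) (by positivity)
  have h1 : 1 - 1/(b/a) = 1 - a/b := by rw [one_div_div]
  rw [h1] at h
  have hlog : Real.log (b/a) = Real.log b - Real.log a := Real.log_div (ne_of_gt hb0) (ne_of_gt ha0)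
  rw [hlog] at h
  have h2 : b * (1 - a/b) ≤ b * (Real.log b - Real.log a) := by
    apply mul_le_mul_of_nonneg_left h (le_of_lt hb0)
  have h3 : b * (1 - a/b) = b - a := by field_simp
  nlinarith [h2]

lemma F_mono {a b : ℝ} (ha : 1 ≤ a) (hab : a ≤ b) :
    a * Real.log a - a ≤ b * Real.log b - b := by
  have := F_diff_lb ha hab
  have hla : 0 ≤ Real.log a := Real.log_nonneg ha
  nlinarith [this, hla]

-- for k | 30-family: bounds on TT(N/k) in terms of F(x/k)
lemma TT_div_lb (N k : ℕ) (hk : 0 < k) (hN : k ≤ N) :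
    (N:ℝ)/k * Real.log ((N:ℝ)/k) - (N:ℝ)/k + 1 - Real.log N ≤ TT (N/k) := by
  set m := N / k with hm
  have hm1 : 1 ≤ m := (Nat.one_le_div_iff hk).2 hN
  have hmr : ((m:ℝ)) ≤ (N:ℝ)/k := by
    rw [le_div_iff₀ (by exact_mod_cast hk)]
    exact_mod_cast Nat.div_mul_le_self N k
  have hmr2 : (N:ℝ)/k - 1 ≤ (m:ℝ) := by
    have h1 : N < (m+1) * k := (Nat.div_lt_iff_lt_mul hk).1 (by omega)
    have h2 : (N:ℝ) < ((m:ℝ)+1) * k := by exact_mod_cast h1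
    rw [sub_le_iff_le_add, div_le_iff₀ (by exact_mod_cast hk : (0:ℝ) < (k:ℝ))]
    have hk1 : (1:ℝ) ≤ (k:ℝ) := by exact_mod_cast hk
    nlinarith [h2, hk1]
  have hk1 : (1:ℝ) ≤ (N:ℝ)/k := by
    rw [le_div_iff₀ (by exact_mod_cast hk : (0:ℝ) < (k:ℝ))]
    have : (k:ℝ) ≤ (N:ℝ) := by exact_mod_cast hN
    linarith
  have hm1r : (1:ℝ) ≤ (m:ℝ) := by exact_mod_cast hm1
  have hTT := TT_lb m hm1
  -- F(m) ≥ F(x/k) - (x/k - m) * log (x/k) ≥ F(x/k) - log(x/k)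
  have hF := F_diff_ub hm1r hmr
  have hlogxk : Real.log ((N:ℝ)/k) ≤ Real.log N := by
    apply Real.log_le_log (by linarith)
    calc (N:ℝ)/k ≤ (N:ℝ)/1 := by
          apply div_le_div_of_nonneg_left (by linarith) (by norm_num)
          exact_mod_cast hk
      _ = (N:ℝ) := by ring
  have hlog0 : 0 ≤ Real.log ((N:ℝ)/k) := Real.log_nonneg hk1
  nlinarith [hF, hTT, hlogxk, hlog0, hmr2]

lemma TT_div_ub (N k : ℕ) (hk : 0 < k) (hN : k ≤ N) :
    TT (N/k) ≤ (N:ℝ)/k * Real.log ((N:ℝ)/k) - (N:ℝ)/k + 1 + Real.log N := by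
  set m := N / k with hm
  have hm1 : 1 ≤ m := (Nat.one_le_div_iff hk).2 hN
  have hmr : ((m:ℝ)) ≤ (N:ℝ)/k := by
    rw [le_div_iff₀ (by exact_mod_cast hk)]
    exact_mod_cast Nat.div_mul_le_self N k
  have hm1r : (1:ℝ) ≤ (m:ℝ) := by exact_mod_cast hm1
  have hTT := TT_ub m hm1
  have hF := F_mono hm1r hmr
  have hlogm : Real.log (m:ℝ) ≤ Real.log N := by
    apply Real.log_le_log (by linarith)
    exact_mod_cast Nat.div_le_self N k
  nlinarith [hTT, hF, hlogm]

lemma Fcomb (x : ℝ) (hx : 0 < x) :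
    (x * Real.log x - x) - (x/2 * Real.log (x/2) - x/2) - (x/3 * Real.log (x/3) - x/3)
      - (x/5 * Real.log (x/5) - x/5) + (x/30 * Real.log (x/30) - x/30) = CA * x := by
  rw [Real.log_div (ne_of_gt hx) (by norm_num), Real.log_div (ne_of_gt hx) (by norm_num),
    Real.log_div (ne_of_gt hx) (by norm_num), Real.log_div (ne_of_gt hx) (by norm_num), CA]
  ring

lemma log_ge_one {N : ℕ} (hN : 30 ≤ N) : 1 ≤ Real.log N := by
  have h3 : (3:ℝ) ≤ (N:ℝ) := by exact_mod_cast (by omega : 3 ≤ N)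
  calc (1:ℝ) ≤ Real.log 3 := by
        rw [← Real.log_exp 1]
        apply Real.log_le_log (Real.exp_pos 1)
        have := Real.exp_one_lt_d9
        linarith
    _ ≤ Real.log N := Real.log_le_log (by norm_num) h3

lemma EE_lb (N : ℕ) (hN : 30 ≤ N) : CA * N - 5 * Real.log N ≤ EE N := by
  have hN1 : 1 ≤ N := by omega
  have h1 := TT_lb N hN1
  have h2 := TT_div_ub N 2 (by norm_num) (by omega)
  have h3 := TT_div_ub N 3 (by norm_num) (by omega)
  have h5 := TT_div_ub N 5 (by norm_num) (by omega)
  have h30 := TT_div_lb N 30 (by norm_num) (by omega)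
  have hc := Fcomb (N:ℝ) (by positivity)
  have hl := log_ge_one hN
  rw [EE]
  push_cast at *
  nlinarith [h1, h2, h3, h5, h30, hc, hl]

lemma EE_ub (N : ℕ) (hN : 30 ≤ N) : EE N ≤ CA * N + 5 * Real.log N := by
  have hN1 : 1 ≤ N := by omega
  have h1 := TT_ub N hN1
  have h2 := TT_div_lb N 2 (by norm_num) (by omega)
  have h3 := TT_div_lb N 3 (by norm_num) (by omega)
  have h5 := TT_div_lb N 5 (by norm_num) (by omega)
  have h30 := TT_div_ub N 30 (by norm_num) (by omega)
  have hc := Fcomb (N:ℝ) (by positivity)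
  have hl := log_ge_one hN
  rw [EE]
  push_cast at *
  nlinarith [h1, h2, h3, h5, h30, hc, hl]



lemma log3_lb : (1.0983:ℝ) ≤ Real.log 3 := by
  have h1 : Real.log (256/243) = 8 * Real.log 2 - 5 * Real.log 3 := by
    rw [Real.log_div (by norm_num) (by norm_num),
      show (256:ℝ) = 2^8 by norm_num, show (243:ℝ) = 3^5 by norm_num,
      Real.log_pow, Real.log_pow]
    push_cast; ring
  have h2 : Real.log (256/243) ≤ 13/243 :=
    le_trans (Real.log_le_sub_one_of_pos (by norm_num)) (by norm_num)
  have hl2 := Real.log_two_gt_d9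
  rw [h1] at h2
  norm_num at hl2 ⊢
  linarith

lemma log3_ub : Real.log 3 ≤ (1.1932:ℝ) := by
  have h1 : Real.log 3 = Real.log 2 + Real.log (3/2) := by
    rw [← Real.log_mul (by norm_num) (by norm_num)]; norm_num
  have h2 : Real.log (3/2) ≤ 1/2 :=
    le_trans (Real.log_le_sub_one_of_pos (by norm_num)) (by norm_num)
  have hl2 := Real.log_two_lt_d9
  norm_num at hl2 ⊢
  linarith

lemma log5_lb : (1.6093:ℝ) ≤ Real.log 5 := by
  have h1 : Real.log (128/125) = 7 * Real.log 2 - 3 * Real.log 5 := by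
    rw [Real.log_div (by norm_num) (by norm_num),
      show (128:ℝ) = 2^7 by norm_num, show (125:ℝ) = 5^3 by norm_num,
      Real.log_pow, Real.log_pow]
    push_cast; ring
  have h2 : Real.log (128/125) ≤ 3/125 :=
    le_trans (Real.log_le_sub_one_of_pos (by norm_num)) (by norm_num)
  have hl2 := Real.log_two_gt_d9
  rw [h1] at h2
  norm_num at hl2 ⊢
  linarith

lemma CA_expand : CA = (7/15) * Real.log 2 + (3/10) * Real.log 3 + (1/6) * Real.log 5 := by
  have h30 : Real.log 30 = Real.log 2 + Real.log 3 + Real.log 5 := by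
    rw [show (30:ℝ) = 2*(3*5) by norm_num, Real.log_mul (by norm_num) (by norm_num),
      Real.log_mul (by norm_num) (by norm_num)]
    ring
  rw [CA, h30]; ring

lemma CA_ge : (0.92:ℝ) ≤ CA := by
  rw [CA_expand]
  have := Real.log_two_gt_d9
  have := log3_lb
  have := log5_lb
  norm_num at *
  linarith

lemma CA_pos : (0:ℝ) < CA := lt_of_lt_of_le (by norm_num) CA_ge

lemma log6_lb : (1.6:ℝ) ≤ Real.log 6 := by
  have h1 : Real.log 6 = Real.log 2 + Real.log 3 := by
    rw [← Real.log_mul (by norm_num) (by norm_num)]; norm_num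
  have := Real.log_two_gt_d9
  have := log3_lb
  norm_num at *
  linarith

lemma log6_ub : Real.log 6 ≤ (2:ℝ) := by
  have h1 : Real.log 6 = Real.log 2 + Real.log 3 := by
    rw [← Real.log_mul (by norm_num) (by norm_num)]; norm_num
  have := Real.log_two_lt_d9
  have := log3_ub
  norm_num at *
  linarith

lemma psi_lb (N : ℕ) (hN : 30 ≤ N) : CA * N - 5 * Real.log N ≤ psi N :=
  le_trans (EE_lb N hN) (EE_le_psi N)

lemma psi_le_TT (N : ℕ) : psi N ≤ TT N :=
  Finset.sum_le_sum (fun n _ => ArithmeticFunction.vonMangoldt_le_log)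

lemma psi_mono {M N : ℕ} (h : M ≤ N) : psi M ≤ psi N := by
  apply Finset.sum_le_sum_of_subset_of_nonneg (Finset.Icc_subset_Icc_right h)
  exact fun _ _ _ => ArithmeticFunction.vonMangoldt_nonneg

lemma log29_ub : Real.log 29 ≤ 3.466 := by
  have h : Real.log 29 ≤ Real.log 32 := Real.log_le_log (by norm_num) (by norm_num)
  rw [show (32:ℝ) = 2^5 by norm_num, Real.log_pow] at h
  have := Real.log_two_lt_d9
  push_cast at h
  norm_num at *
  linarith

lemma psi_29 : psi 29 ≤ 100 := by
  have h1 := psi_le_TT 29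
  have h2 := TT_ub 29 (by norm_num)
  have h3 := log29_ub
  have : ((29:ℕ):ℝ) = (29:ℝ) := by norm_num
  rw [this] at h2
  nlinarith [h1, h2, h3]

lemma psi_ub : ∀ N : ℕ, psi N ≤ 1.2 * CA * N + 4*(Real.log N + 1)^2 + 100 := by
  intro N
  induction N using Nat.strong_induction_on with
  | _ N ih =>
    rcases le_or_gt N 29 with hN | hN
    · have h1 : psi N ≤ psi 29 := psi_mono hN
      have h2 := psi_29
      have h3 : (0:ℝ) ≤ 1.2 * CA * N := by
        have := CA_pos
        positivity
      nlinarith [sq_nonneg (Real.log N + 1)]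
    · have hN30 : 30 ≤ N := hN
      have hrec := ih (N/6) (by omega)
      have hEE := EE_ub N hN30
      have hstep := psi_sub_le_EE N
      set m := N / 6 with hm
      have hm5 : 5 ≤ m := by omega
      have hmr : (m:ℝ) ≤ (N:ℝ)/6 := by
        rw [le_div_iff₀ (by norm_num)]
        exact_mod_cast Nat.div_mul_le_self N 6
      have hm1 : (1:ℝ) ≤ (m:ℝ) := by exact_mod_cast (by omega : 1 ≤ m)
      have hlogm : Real.log m ≤ Real.log N - Real.log 6 := by
        have : Real.log m ≤ Real.log ((N:ℝ)/6) := Real.log_le_log (by linarith) hmr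
        rwa [Real.log_div (by positivity) (by norm_num)] at this
      have hlogm0 : 0 ≤ Real.log m := Real.log_nonneg hm1
      have hlogN : 1 ≤ Real.log N := by
        rw [← Real.log_exp 1]
        apply Real.log_le_log (Real.exp_pos 1)
        have := Real.exp_one_lt_d9
        have : (3:ℝ) ≤ (N:ℝ) := by exact_mod_cast (by omega : 3 ≤ N)
        linarith [Real.exp_one_lt_d9]
      have h6l := log6_lb
      have h6u := log6_ub
      have hCA := CA_ge
      have hCAp := CA_pos
      -- psi N ≤ EE N + psi m ≤ CA N + 5 log N + 1.2 CA m + 4 (log m + 1)^2 + 100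
      have key : CA * N + 5 * Real.log N + (1.2 * CA * m + 4*(Real.log m + 1)^2 + 100)
          ≤ 1.2 * CA * N + 4*(Real.log N + 1)^2 + 100 := by
        have e1 : 1.2 * CA * m ≤ 0.2 * CA * N := by nlinarith [hmr, hCAp]
        have e2 : 4*(Real.log m + 1)^2 + 5 * Real.log N ≤ 4*(Real.log N + 1)^2 := by
          nlinarith [hlogm, hlogm0, hlogN, h6l, h6u]
        nlinarith [e1, e2]
      linarith [hstep, hEE, hrec, key]


-- theta-type bound from primorial
lemma theta_bound (s : ℕ) : ∑ p ∈ (Finset.Icc 1 s).filter Nat.Prime, Real.log p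
    ≤ (s:ℝ) * (2 * Real.log 2) := by
  have he : (Finset.Icc 1 s).filter Nat.Prime = (Finset.range (s+1)).filter Nat.Prime := by
    ext q
    simp only [Finset.mem_filter, Finset.mem_Icc, Finset.mem_range]
    constructor
    · rintro ⟨⟨h1, h2⟩, hp⟩; exact ⟨by omega, hp⟩
    · rintro ⟨h1, hp⟩; exact ⟨⟨hp.one_lt.le.trans' (by norm_num), by omega⟩, hp⟩
  rw [he]
  have hprod : ∑ p ∈ (Finset.range (s+1)).filter Nat.Prime, Real.log p
      = Real.log (primorial s) := by
    rw [primorial]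
    push_cast
    rw [Real.log_prod]
    intro p hp
    simp only [Finset.mem_filter] at hp
    exact_mod_cast hp.2.pos.ne'
  rw [hprod]
  have h4 := primorial_le_4_pow s
  have h4r : ((primorial s : ℕ) : ℝ) ≤ (4:ℝ)^s := by exact_mod_cast h4
  have hpos : (0:ℝ) < ((primorial s : ℕ) : ℝ) := by
    have : 0 < primorial s := Finset.prod_pos (fun p hp => (Finset.mem_filter.1 hp).2.pos)
    exact_mod_cast this
  calc Real.log (primorial s) ≤ Real.log ((4:ℝ)^s) := Real.log_le_log hpos h4r
    _ = s * Real.log 4 := by rw [Real.log_pow]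
    _ = (s:ℝ) * (2 * Real.log 2) := by
        rw [show (4:ℝ) = 2^2 by norm_num, Real.log_pow]; push_cast; ring

lemma Err_bound (M : ℕ) (hM : 1 ≤ M) :
    Err M ≤ (Nat.log 2 M : ℝ) * ((Nat.sqrt M : ℝ) * (2 * Real.log 2)) := by
  rw [Err]
  -- restrict to prime powers
  have hsub : ∑ n ∈ (Finset.Icc 1 M).filter (fun n => ¬ n.Prime), Λ n
      = ∑ n ∈ (Finset.Icc 1 M).filter (fun n => ¬ n.Prime ∧ IsPrimePow n), Λ n := by
    symm
    apply Finset.sum_subset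
    · intro n hn
      simp only [Finset.mem_filter] at hn ⊢
      exact ⟨hn.1, hn.2.1⟩
    · intro n hn hn2
      simp only [Finset.mem_filter] at hn hn2
      push_neg at hn2
      exact ArithmeticFunction.vonMangoldt_eq_zero_iff.2 (fun hpp => hn2 hn.1 hn.2 hpp)
  rw [hsub]
  -- partition by the exponent k = n.factorization n.minFac
  set S := (Finset.Icc 1 M).filter (fun n => ¬ n.Prime ∧ IsPrimePow n) with hS
  set L := Nat.log 2 M with hL
  have hmaps : ∀ n ∈ S, n.factorization n.minFac ∈ Finset.Icc 2 L := by
    intro n hn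
    simp only [hS, Finset.mem_filter, Finset.mem_Icc] at hn
    obtain ⟨⟨hn1, hnM⟩, hnp, hpp⟩ := hn
    have hpf := hpp.minFac_pow_factorization_eq
    set p := n.minFac with hp
    set k := n.factorization p with hk
    have hprime : p.Prime := Nat.minFac_prime hpp.ne_one
    have hk2 : 2 ≤ k := by
      by_contra h
      push_neg at h
      interval_cases k
      · rw [pow_zero] at hpf; exact hpp.ne_one hpf.symm
      · rw [pow_one] at hpf; exact hnp (hpf ▸ hprime)
    have hkL : k ≤ L := by
      rw [hL, Nat.le_log_iff_pow_le (by norm_num) (by omega : M ≠ 0)]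
      calc 2^k ≤ p^k := Nat.pow_le_pow_left hprime.two_le k
        _ = n := hpf
        _ ≤ M := hnM
    exact Finset.mem_Icc.2 ⟨hk2, hkL⟩
  rw [← Finset.sum_fiberwise_of_maps_to hmaps]
  have hbound : ∀ k ∈ Finset.Icc 2 L, ∑ n ∈ S.filter (fun n => n.factorization n.minFac = k), Λ n
      ≤ (Nat.sqrt M : ℝ) * (2 * Real.log 2) := by
    intro k hk
    simp only [Finset.mem_Icc] at hk
    set Sk := S.filter (fun n => n.factorization n.minFac = k) with hSk
    have hval : ∀ n ∈ Sk, Λ n = Real.log (n.minFac) := by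
      intro n hn
      simp only [hSk, hS, Finset.mem_filter] at hn
      rw [ArithmeticFunction.vonMangoldt_apply, if_pos hn.1.2.2]
    rw [Finset.sum_congr rfl hval]
    have hinj : Set.InjOn (fun n : ℕ => n.minFac) (Sk : Set ℕ) := by
      intro a ha b hb hab
      simp only [hSk, hS, Finset.mem_coe, Finset.mem_filter] at ha hb
      have hA := ha.1.2.2.minFac_pow_factorization_eq
      have hB := hb.1.2.2.minFac_pow_factorization_eq
      rw [ha.2] at hA
      rw [hb.2] at hB
      simp only at hab
      rw [← hA, ← hB, hab]
    have himg : ∑ q ∈ Sk.image (fun n : ℕ => n.minFac), Real.log (q:ℝ)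
        = ∑ x ∈ Sk, Real.log ((x.minFac : ℕ) : ℝ) :=
      Finset.sum_image (fun a ha b hb hab => hinj (by exact_mod_cast ha) (by exact_mod_cast hb) hab)
    rw [← himg]
    have himsub : Sk.image (fun n : ℕ => n.minFac) ⊆ (Finset.Icc 1 (Nat.sqrt M)).filter Nat.Prime := by
      intro q hq
      simp only [Finset.mem_image] at hq
      obtain ⟨n, hn, rfl⟩ := hq
      simp only [hSk, hS, Finset.mem_filter, Finset.mem_Icc] at hn ⊢
      obtain ⟨⟨⟨hn1, hnM⟩, hnp, hpp⟩, hkk⟩ := hn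
      have hprime : n.minFac.Prime := Nat.minFac_prime hpp.ne_one
      refine ⟨⟨hprime.pos, ?_⟩, hprime⟩
      rw [Nat.le_sqrt]
      have hpf := hpp.minFac_pow_factorization_eq
      calc n.minFac * n.minFac = n.minFac ^ 2 := by ring
        _ ≤ n.minFac ^ (n.factorization n.minFac) := by
            apply Nat.pow_le_pow_right hprime.pos
            omega
        _ = n := hpf
        _ ≤ M := hnM
    calc ∑ q ∈ Sk.image (fun n : ℕ => n.minFac), Real.log q
        ≤ ∑ q ∈ (Finset.Icc 1 (Nat.sqrt M)).filter Nat.Prime, Real.log q := by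
          apply Finset.sum_le_sum_of_subset_of_nonneg himsub
          intro q hq _
          simp only [Finset.mem_filter, Finset.mem_Icc] at hq
          exact Real.log_nonneg (by exact_mod_cast hq.1.1)
      _ ≤ (Nat.sqrt M : ℝ) * (2 * Real.log 2) := theta_bound _
  calc ∑ k ∈ Finset.Icc 2 L, ∑ n ∈ S.filter (fun n => n.factorization n.minFac = k), Λ n
      ≤ ∑ k ∈ Finset.Icc 2 L, (Nat.sqrt M : ℝ) * (2 * Real.log 2) :=
        Finset.sum_le_sum hbound
    _ ≤ (L:ℝ) * ((Nat.sqrt M : ℝ) * (2 * Real.log 2)) := by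
        rw [Finset.sum_const, nsmul_eq_mul]
        apply mul_le_mul_of_nonneg_right
        · have := Nat.card_Icc 2 (L+1) -- card Icc 2 L = L - 1
          simp only [Nat.card_Icc]
          have : ((L + 1 - 2 : ℕ) : ℝ) ≤ (L:ℝ) := by
            have : L + 1 - 2 ≤ L := by omega
            exact_mod_cast this
          exact this
        · positivity



lemma CA_ub : CA ≤ (1.2:ℝ) := by
  have h2 := Real.log_two_lt_d9
  have h3 := log3_ub
  have h5 : Real.log 5 ≤ 2.08 := by
    calc Real.log 5 ≤ Real.log 8 := Real.log_le_log (by norm_num) (by norm_num)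
      _ = 3 * Real.log 2 := by
          rw [show (8:ℝ) = 2^3 by norm_num, Real.log_pow]; push_cast; ring
      _ ≤ 2.08 := by norm_num at h2 ⊢; linarith
  have h30 : 0 ≤ Real.log 30 := Real.log_nonneg (by norm_num)
  rw [CA]
  norm_num at *
  linarith

theorem analytic_main (N : ℕ) (hN : 4000000 ≤ N) :
    ∃ q : ℕ, q.Prime ∧ N < q ∧ 5 * q ≤ 7 * N := by
  by_contra hcon
  push_neg at hcon
  set M := 7 * N / 5 with hM
  have hNM : N < M := by omega
  have hM1 : 1 ≤ M := by omega
  have h5M : 5 * M ≤ 7 * N := by omega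
  have h5M' : 7 * N ≤ 5 * M + 4 := by omega
  -- no primes in (N, M]
  have hnoprime : ∀ n ∈ Finset.Ioc N M, ¬ n.Prime := by
    intro n hn hp
    simp only [Finset.mem_Ioc] at hn
    have := hcon n hp hn.1
    omega
  -- psi M - psi N ≤ Err M
  have hsplit : psi N + ∑ n ∈ Finset.Ioc N M, Λ n = psi M := by
    rw [psi, psi, (rfl : Finset.Icc 1 N = Finset.Ioc 0 N),
      (rfl : Finset.Icc 1 M = Finset.Ioc 0 M)]
    exact Finset.sum_Ioc_consecutive _ (Nat.zero_le _) hNM.le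
  have hgap : psi M - psi N ≤ Err M := by
    have hsub : Finset.Ioc N M ⊆ (Finset.Icc 1 M).filter (fun n => ¬ n.Prime) := by
      intro n hn
      simp only [Finset.mem_Ioc] at hn
      simp only [Finset.mem_filter, Finset.mem_Icc]
      exact ⟨⟨by omega, hn.2⟩, hnoprime n (by simp [Finset.mem_Ioc]; omega)⟩
    have := Finset.sum_le_sum_of_subset_of_nonneg (f := fun n : ℕ => Λ n) hsub
      (fun _ _ _ => ArithmeticFunction.vonMangoldt_nonneg)
    rw [Err]
    linarith [hsplit, this]
  -- real variables
  set x : ℝ := (N : ℝ) with hx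
  have hx0 : (0:ℝ) < x := by positivity
  have hx4 : (4000000:ℝ) ≤ x := by rw [hx]; exact_mod_cast hN
  set u : ℝ := x ^ ((1:ℝ)/16) with hu
  have hu0 : 0 < u := Real.rpow_pos_of_pos hx0 _
  have hu16 : u^(16:ℕ) = x := by
    rw [hu, ← Real.rpow_natCast (x ^ ((1:ℝ)/16)) 16, ← Real.rpow_mul hx0.le]
    norm_num
  have hu25 : (2.5:ℝ) ≤ u := by
    by_contra hc
    push_neg at hc
    have : u^(16:ℕ) < (2.5:ℝ)^(16:ℕ) := by
      apply pow_lt_pow_left₀ hc hu0.le (by norm_num)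
    rw [hu16] at this
    norm_num at this
    linarith
  have hlogu : Real.log u = (1/16) * Real.log x := Real.log_rpow hx0 _
  have hloguu : Real.log u ≤ u - 1 := by
    have := Real.log_le_sub_one_of_pos hu0
    linarith
  have hlxu : Real.log x ≤ 16 * u - 16 := by
    rw [show Real.log x = 16 * Real.log u by rw [hlogu]; ring]
    linarith
  have hlx0 : 0 ≤ Real.log x := Real.log_nonneg (by linarith)
  -- M real bounds
  have hMr1 : (M:ℝ) ≤ 1.4 * x := by
    have : (5:ℝ) * M ≤ 7 * x := by rw [hx]; exact_mod_cast h5M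
    linarith
  have hMr2 : 1.4 * x - 0.8 ≤ (M:ℝ) := by
    have : (7:ℝ) * x ≤ 5 * M + 4 := by rw [hx]; exact_mod_cast h5M'
    linarith
  -- log M bounds
  have hlogM : Real.log M ≤ 16 * u - 15 := by
    have h1 : Real.log M ≤ Real.log (1.4 * x) := by
      apply Real.log_le_log (by exact_mod_cast hM1.trans_lt (by omega : M < M + 1) |> fun _ => (by positivity : (0:ℝ) < (M:ℝ))) hMr1
    have h2 : Real.log (1.4 * x) = Real.log 1.4 + Real.log x :=
      Real.log_mul (by norm_num) (ne_of_gt hx0)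
    have h3 : Real.log (1.4:ℝ) ≤ 0.4 := by
      have := Real.log_le_sub_one_of_pos (x := (1.4:ℝ)) (by norm_num)
      linarith
    linarith
  have hlogM0 : 0 ≤ Real.log M := Real.log_nonneg (by exact_mod_cast hM1)
  -- Nat.log bound
  have hL : (Nat.log 2 M : ℝ) ≤ 33 * u := by
    have h1 : 2 ^ (Nat.log 2 M) ≤ M := Nat.pow_log_le_self 2 (by omega)
    have h2 : ((2:ℝ)) ^ (Nat.log 2 M) ≤ (M:ℝ) := by exact_mod_cast h1
    have h3 : (Nat.log 2 M : ℝ) * Real.log 2 ≤ Real.log M := by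
      rw [← Real.log_pow]
      exact Real.log_le_log (by positivity) h2
    have h4 := Real.log_two_gt_d9
    have h5 : (Nat.log 2 M : ℝ) ≤ 2 * Real.log M := by
      nlinarith [h3, h4, hlogM0]
    nlinarith [hlogM, h5, hu25]
  -- Nat.sqrt bound
  have hsq : (Nat.sqrt M : ℝ) ≤ 1.19 * u^(8:ℕ) := by
    have h1 : (Nat.sqrt M) ^ 2 ≤ M := Nat.sqrt_le' M
    have h2 : ((Nat.sqrt M : ℝ)) ^ 2 ≤ (M:ℝ) := by exact_mod_cast h1
    have h4 : (M:ℝ) ≤ 1.4161 * u^(16:ℕ) := by rw [hu16]; linarith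
    by_contra hc
    push_neg at hc
    have hB0 : (0:ℝ) ≤ 1.19 * u^(8:ℕ) := by positivity
    have h5 : (1.19 * u^(8:ℕ))^2 < ((Nat.sqrt M : ℝ))^2 := by
      have := mul_self_lt_mul_self hB0 hc
      nlinarith [this]
    have h6 : (1.19 * u^(8:ℕ))^2 = 1.4161 * u^(16:ℕ) := by ring
    linarith
  -- assemble
  have hpsiM := psi_lb M (by omega)
  have hpsiN := psi_ub N
  have hErr := Err_bound M hM1
  have hl2 := Real.log_two_lt_d9
  have hCAl := CA_ge
  have hCAu := CA_ub
  -- Err M ≤ 55 u^9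
  have hErr2 : Err M ≤ 55 * u^(9:ℕ) := by
    have hstep : (Nat.log 2 M : ℝ) * ((Nat.sqrt M : ℝ) * (2 * Real.log 2))
        ≤ (33*u) * ((1.19 * u^(8:ℕ)) * 1.3862944) := by
      apply mul_le_mul hL
      · apply mul_le_mul hsq (by norm_num at hl2 ⊢; linarith) (by positivity)
        positivity
      · positivity
      · positivity
    have : (33*u) * ((1.19 * u^(8:ℕ)) * 1.3862944) ≤ 55 * u^(9:ℕ) := by
      nlinarith [pow_pos hu0 8, pow_pos hu0 9, hu0]
    linarith [hErr, hstep, this]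
  -- psi M ≥ CA*(1.4x - 0.8) - 5*(16u-15)
  have hpsiM2 : CA * (1.4*x - 0.8) - 5*(16*u - 15) ≤ psi M := by
    have h1 : CA * (1.4*x-0.8) ≤ CA * M := by nlinarith [hMr2, hCAl]
    nlinarith [hpsiM, h1, hlogM, hCAl]
  -- psi N ≤ 1.2 CA x + 4 (16u-15)^2 + 100  (log x + 1 ≤ 16u - 15)
  have hpsiN2 : psi N ≤ 1.2 * CA * x + 4*(16*u-15)^2 + 100 := by
    have h1 : Real.log x + 1 ≤ 16*u - 15 := by linarith
    have h2 : (Real.log x + 1)^2 ≤ (16*u-15)^2 := by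
      nlinarith [hlx0, h1]
    nlinarith [hpsiN, h2]
  -- final contradiction
  have hfin : psi M - psi N ≤ Err M := hgap
  have hx16 : x = u^(16:ℕ) := hu16.symm
  rw [hx16] at hpsiM2 hpsiN2
  have hu7 : (610:ℝ) ≤ u^(7:ℕ) := by
    calc (610:ℝ) ≤ 2.5^(7:ℕ) := by norm_num
      _ ≤ u^(7:ℕ) := pow_le_pow_left₀ (by norm_num) hu25 7
  have hrng1 : CA * (1.4*u^(16:ℕ) - 0.8) - 5*(16*u - 15)
      = 1.4*(CA*u^(16:ℕ)) - 0.8*CA - 80*u + 75 := by ring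
  have hE1 : 0.2*(CA*u^(16:ℕ)) ≤ 55*u^(9:ℕ) + 4*(16*u-15)^2 + 0.8*CA + 25 + 80*u := by
    linarith [hfin, hErr2, hpsiM2, hpsiN2, hrng1]
  -- numeric: 0.184 u^16 > RHS
  have hCA16 : 0.92 * u^(16:ℕ) ≤ CA * u^(16:ℕ) :=
    mul_le_mul_of_nonneg_right hCAl (by positivity)
  have hu9pos : (0:ℝ) < u^(9:ℕ) := pow_pos hu0 9
  have hu916 : 610 * u^(9:ℕ) ≤ u^(16:ℕ) := by
    have h := mul_le_mul_of_nonneg_left hu7 (le_of_lt hu9pos)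
    calc (610:ℝ) * u^(9:ℕ) = u^(9:ℕ) * 610 := by ring
      _ ≤ u^(9:ℕ) * u^(7:ℕ) := h
      _ = u^(16:ℕ) := by ring
  have hu29 : 610 * u^(2:ℕ) ≤ u^(9:ℕ) := by
    have h2 : (0:ℝ) ≤ u^(2:ℕ) := by positivity
    have h := mul_le_mul_of_nonneg_left hu7 h2
    calc (610:ℝ) * u^(2:ℕ) = u^(2:ℕ) * 610 := by ring
      _ ≤ u^(2:ℕ) * u^(7:ℕ) := h
      _ = u^(9:ℕ) := by ring
  have huu2 : u ≤ u^(2:ℕ) := by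
    have h := mul_le_mul_of_nonneg_left hu25 hu0.le
    have he : u^(2:ℕ) = u * u := by ring
    nlinarith [h, hu0]
  -- expand (16u-15)^2 ≤ 256 u^2
  have hsq2 : 4*(16*u-15)^2 ≤ 1024*u^(2:ℕ) := by
    have he : 4*(16*u-15)^2 = 1024*u^(2:ℕ) - 1920*u + 900 := by ring
    linarith [he, hu25]
  have hu9ge1 : (1:ℝ) ≤ u^(9:ℕ) := by
    calc (1:ℝ) = 1^(9:ℕ) := by norm_num
      _ ≤ u^(9:ℕ) := pow_le_pow_left₀ (by norm_num) (by linarith) 9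
  linarith [hE1, hCA16, hu916, hu29, huu2, hsq2, hCAu, hu9pos, hu9ge1]



lemma chain_step {a b : ℕ} (hb : b.Prime) (hab : 5 * b ≤ 7 * a) :
    ∀ P : ℕ, a ≤ P → P < b → Good P :=
  fun P h1 h2 => ⟨b, hb, h2, by omega⟩

lemma cover : ∀ P : ℕ, 11 ≤ P → P < 4943843 → Good P := by
  intro P h1 h2
  rcases Nat.lt_or_ge P 13 with h | h
  · exact chain_step (by norm_num) (by norm_num : 5 * 13 ≤ 7 * 11) P (by omega) h
  rcases Nat.lt_or_ge P 17 with h | h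
  · exact chain_step (by norm_num) (by norm_num : 5 * 17 ≤ 7 * 13) P (by omega) h
  rcases Nat.lt_or_ge P 23 with h | h
  · exact chain_step (by norm_num) (by norm_num : 5 * 23 ≤ 7 * 17) P (by omega) h
  rcases Nat.lt_or_ge P 31 with h | h
  · exact chain_step (by norm_num) (by norm_num : 5 * 31 ≤ 7 * 23) P (by omega) h
  rcases Nat.lt_or_ge P 43 with h | h
  · exact chain_step (by norm_num) (by norm_num : 5 * 43 ≤ 7 * 31) P (by omega) h
  rcases Nat.lt_or_ge P 59 with h | h
  · exact chain_step (by norm_num) (by norm_num : 5 * 59 ≤ 7 * 43) P (by omega) h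
  rcases Nat.lt_or_ge P 79 with h | h
  · exact chain_step (by norm_num) (by norm_num : 5 * 79 ≤ 7 * 59) P (by omega) h
  rcases Nat.lt_or_ge P 109 with h | h
  · exact chain_step (by norm_num) (by norm_num : 5 * 109 ≤ 7 * 79) P (by omega) h
  rcases Nat.lt_or_ge P 151 with h | h
  · exact chain_step (by norm_num) (by norm_num : 5 * 151 ≤ 7 * 109) P (by omega) h
  rcases Nat.lt_or_ge P 211 with h | h
  · exact chain_step (by norm_num) (by norm_num : 5 * 211 ≤ 7 * 151) P (by omega) h
  rcases Nat.lt_or_ge P 293 with h | h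
  · exact chain_step (by norm_num) (by norm_num : 5 * 293 ≤ 7 * 211) P (by omega) h
  rcases Nat.lt_or_ge P 409 with h | h
  · exact chain_step (by norm_num) (by norm_num : 5 * 409 ≤ 7 * 293) P (by omega) h
  rcases Nat.lt_or_ge P 571 with h | h
  · exact chain_step (by norm_num) (by norm_num : 5 * 571 ≤ 7 * 409) P (by omega) h
  rcases Nat.lt_or_ge P 797 with h | h
  · exact chain_step (by norm_num) (by norm_num : 5 * 797 ≤ 7 * 571) P (by omega) h
  rcases Nat.lt_or_ge P 1109 with h | h
  · exact chain_step (by norm_num) (by norm_num : 5 * 1109 ≤ 7 * 797) P (by omega) h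
  rcases Nat.lt_or_ge P 1549 with h | h
  · exact chain_step (by norm_num) (by norm_num : 5 * 1549 ≤ 7 * 1109) P (by omega) h
  rcases Nat.lt_or_ge P 2161 with h | h
  · exact chain_step (by norm_num) (by norm_num : 5 * 2161 ≤ 7 * 1549) P (by omega) h
  rcases Nat.lt_or_ge P 3023 with h | h
  · exact chain_step (by norm_num) (by norm_num : 5 * 3023 ≤ 7 * 2161) P (by omega) h
  rcases Nat.lt_or_ge P 4231 with h | h
  · exact chain_step (by norm_num) (by norm_num : 5 * 4231 ≤ 7 * 3023) P (by omega) h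
  rcases Nat.lt_or_ge P 5923 with h | h
  · exact chain_step (by norm_num) (by norm_num : 5 * 5923 ≤ 7 * 4231) P (by omega) h
  rcases Nat.lt_or_ge P 8291 with h | h
  · exact chain_step (by norm_num) (by norm_num : 5 * 8291 ≤ 7 * 5923) P (by omega) h
  rcases Nat.lt_or_ge P 11597 with h | h
  · exact chain_step (by norm_num) (by norm_num : 5 * 11597 ≤ 7 * 8291) P (by omega) h
  rcases Nat.lt_or_ge P 16231 with h | h
  · exact chain_step (by norm_num) (by norm_num : 5 * 16231 ≤ 7 * 11597) P (by omega) h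
  rcases Nat.lt_or_ge P 22721 with h | h
  · exact chain_step (by norm_num) (by norm_num : 5 * 22721 ≤ 7 * 16231) P (by omega) h
  rcases Nat.lt_or_ge P 31799 with h | h
  · exact chain_step (by norm_num) (by norm_num : 5 * 31799 ≤ 7 * 22721) P (by omega) h
  rcases Nat.lt_or_ge P 44507 with h | h
  · exact chain_step (by norm_num) (by norm_num : 5 * 44507 ≤ 7 * 31799) P (by omega) h
  rcases Nat.lt_or_ge P 62303 with h | h
  · exact chain_step (by norm_num) (by norm_num : 5 * 62303 ≤ 7 * 44507) P (by omega) h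
  rcases Nat.lt_or_ge P 87223 with h | h
  · exact chain_step (by norm_num) (by norm_num : 5 * 87223 ≤ 7 * 62303) P (by omega) h
  rcases Nat.lt_or_ge P 122099 with h | h
  · exact chain_step (by norm_num) (by norm_num : 5 * 122099 ≤ 7 * 87223) P (by omega) h
  rcases Nat.lt_or_ge P 170927 with h | h
  · exact chain_step (by norm_num) (by norm_num : 5 * 170927 ≤ 7 * 122099) P (by omega) h
  rcases Nat.lt_or_ge P 239297 with h | h
  · exact chain_step (by norm_num) (by norm_num : 5 * 239297 ≤ 7 * 170927) P (by omega) h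
  rcases Nat.lt_or_ge P 335009 with h | h
  · exact chain_step (by norm_num) (by norm_num : 5 * 335009 ≤ 7 * 239297) P (by omega) h
  rcases Nat.lt_or_ge P 469009 with h | h
  · exact chain_step (by norm_num) (by norm_num : 5 * 469009 ≤ 7 * 335009) P (by omega) h
  rcases Nat.lt_or_ge P 656609 with h | h
  · exact chain_step (by norm_num) (by norm_num : 5 * 656609 ≤ 7 * 469009) P (by omega) h
  rcases Nat.lt_or_ge P 919249 with h | h
  · exact chain_step (by norm_num) (by norm_num : 5 * 919249 ≤ 7 * 656609) P (by omega) h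
  rcases Nat.lt_or_ge P 1286941 with h | h
  · exact chain_step (by norm_num) (by norm_num : 5 * 1286941 ≤ 7 * 919249) P (by omega) h
  rcases Nat.lt_or_ge P 1801717 with h | h
  · exact chain_step (by norm_num) (by norm_num : 5 * 1801717 ≤ 7 * 1286941) P (by omega) h
  rcases Nat.lt_or_ge P 2522393 with h | h
  · exact chain_step (by norm_num) (by norm_num : 5 * 2522393 ≤ 7 * 1801717) P (by omega) h
  rcases Nat.lt_or_ge P 3531347 with h | h
  · exact chain_step (by norm_num) (by norm_num : 5 * 3531347 ≤ 7 * 2522393) P (by omega) h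
  rcases Nat.lt_or_ge P 4943843 with h | h
  · exact chain_step (by norm_num) (by norm_num : 5 * 4943843 ≤ 7 * 3531347) P (by omega) h
  omega

lemma good_of_prime (P : ℕ) (hP : P.Prime) (h2 : P ≠ 2) (h3 : P ≠ 3) (h7 : P ≠ 7) : Good P := by
  rcases Nat.lt_or_ge P 11 with h | h
  · have h5 : P = 5 := by
      interval_cases P <;> first | rfl | (exfalso; revert hP; decide) | omega
    subst h5
    exact ⟨7, by norm_num, by norm_num, by norm_num⟩
  · rcases Nat.lt_or_ge P 4943843 with hlt | hge
    · exact cover P h hlt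
    · exact analytic_main P (by omega)

theorem stmt4' (j : ℕ) (hj : 0 < j) (h1 : j ≠ 1) (h2 : j ≠ 2) (h4 : j ≠ 4) :
    ((Nat.nth Nat.Prime ((j+1) - 1) : ℕ) : ℝ) / (Nat.nth Nat.Prime (j - 1) : ℕ) ≤ 7 / 5 := by
  set k := j - 1 with hk
  have hjk : (j + 1) - 1 = k + 1 := by omega
  rw [hjk]
  set P := Nat.nth Nat.Prime k with hP
  have hPp : P.Prime := Nat.prime_nth_prime k
  have hinj := (Nat.nth_strictMono (p := Nat.Prime) Nat.infinite_setOf_prime).injective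
  have hne2 : P ≠ 2 := by
    intro h
    have he : Nat.nth Nat.Prime k = Nat.nth Nat.Prime 0 := by
      rw [Nat.nth_prime_zero_eq_two, ← h]
    have := hinj he
    omega
  have hne3 : P ≠ 3 := by
    intro h
    have he : Nat.nth Nat.Prime k = Nat.nth Nat.Prime 1 := by
      rw [Nat.nth_prime_one_eq_three, ← h]
    have := hinj he
    omega
  have h7c : Nat.count Nat.Prime 7 = 3 := by decide
  have h73 : Nat.nth Nat.Prime 3 = 7 := by
    have := Nat.nth_count (p := Nat.Prime) (n := 7) (by norm_num)
    rwa [h7c] at this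
  have hne7 : P ≠ 7 := by
    intro h
    have he : Nat.nth Nat.Prime k = Nat.nth Nat.Prime 3 := by rw [h73, ← h]
    have := hinj he
    omega
  obtain ⟨q, hq, hPq, h5q⟩ := good_of_prime P hPp hne2 hne3 hne7
  have hnext : Nat.nth Nat.Prime (k+1) ≤ q := by
    by_contra hc
    push_neg at hc
    have := Nat.le_nth_of_lt_nth_succ hc hq
    omega
  have hP0 : (0:ℝ) < (P:ℝ) := by exact_mod_cast hPp.pos
  rw [div_le_div_iff₀ hP0 (by norm_num)]
  have : 5 * Nat.nth Nat.Prime (k+1) ≤ 7 * P := by omega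
  have hr : (5:ℝ) * (Nat.nth Nat.Prime (k+1) : ℝ) ≤ 7 * (P:ℝ) := by exact_mod_cast this
  linarith

end ChebyshevDev

theorem stmt4 (j : ℕ) (hj : 0 < j) (h1 : j ≠ 1) (h2 : j ≠ 2) (h4 : j ≠ 4) :
    (p (j + 1) : ℝ) / p j ≤ 7 / 5 := by
  simp only [p]
  exact stmt4' j hj h1 h2 h4
end

section
/- Let p be a prime, and let r, α, γ be positive integers with α > 1 and p ∤ γ. If p^α · γ is a sparsely Schemmel totient number of order r, then p^(α−1) · γ is also a sparsely Schemmel totient number of order r. -/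
lemma S_ppow_mul (r q a t : ℕ) (hq : q.Prime) (ha : a ≠ 0) (ht : t ≠ 0)
    (hqt : ¬ q ∣ t) : S r (q ^ a * t) = q ^ (a - 1) * (q - r) * S r t := by
  have hq0 : q ^ a ≠ 0 := pow_ne_zero _ hq.pos.ne'
  have hqnot : q ∉ t.primeFactors := fun h => hqt (Nat.dvd_of_mem_primeFactors h)
  have hpf : (q ^ a * t).primeFactors = insert q t.primeFactors := by
    rw [Nat.primeFactors_mul hq0 ht, Nat.primeFactors_prime_pow ha hq]
    rfl
  have hfq : (q ^ a * t).factorization q = a := by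
    rw [Nat.factorization_mul hq0 ht]
    simp [Nat.Prime.factorization_pow hq, Nat.factorization_eq_zero_of_not_dvd hqt,
      hq.factorization]
  have hfp : ∀ p ∈ t.primeFactors, (q ^ a * t).factorization p = t.factorization p := by
    intro p hp
    have hne : p ≠ q := fun h => hqnot (h ▸ hp)
    rw [Nat.factorization_mul hq0 ht]
    simp [Nat.Prime.factorization_pow hq, hq.factorization, Finsupp.single_apply,
      hne.symm]
  unfold S
  rw [hpf, Finset.prod_insert hqnot, hfq]
  rw [Finset.prod_congr rfl fun p hp => by rw [hfp p hp]]

theorem stmt5 (q r α γ : ℕ) (hq : q.Prime) (hr : 0 < r) (hα : 1 < α)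
    (hγ : 0 < γ) (hqγ : ¬ q ∣ γ) (h : SST r (q ^ α * γ)) :
    SST r (q ^ (α - 1) * γ) := by
  obtain ⟨hpos, hmin⟩ := h
  have hγ0 : γ ≠ 0 := hγ.ne'
  have hα0 : α ≠ 0 := by omega
  have hα10 : α - 1 ≠ 0 := by omega
  have hn : S r (q ^ α * γ) = q ^ (α - 1) * (q - r) * S r γ :=
    S_ppow_mul r q α γ hq hα0 hγ0 hqγ
  have hn' : S r (q ^ (α - 1) * γ) = q ^ (α - 2) * (q - r) * S r γ :=
    S_ppow_mul r q (α - 1) γ hq hα10 hγ0 hqγ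
  have key : S r (q ^ α * γ) = q * S r (q ^ (α - 1) * γ) := by
    rw [hn, hn']
    have : q ^ (α - 1) = q * q ^ (α - 2) := by
      rw [← pow_succ']
      congr 1
      omega
    rw [this]; ring
  have hpos' : 0 < S r (q ^ (α - 1) * γ) := by
    rw [key] at hpos
    exact Nat.pos_of_ne_zero fun h0 => by simp [h0] at hpos
  refine ⟨hpos', fun m hm hSm => ?_⟩
  have hm0 : m ≠ 0 := by
    have : 0 < q ^ (α - 1) * γ := Nat.mul_pos (pow_pos hq.pos _) hγ
    omega
  set e := m.factorization q with he
  set t := m / q ^ e with htdef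
  have hmt : q ^ e * t = m := Nat.ordProj_mul_ordCompl_eq_self m q
  have hqt : ¬ q ∣ t := Nat.not_dvd_ordCompl hq hm0
  have ht0 : t ≠ 0 := (Nat.ordCompl_pos q hm0).ne'
  have hqr : r ≤ q - 1 := by
    by_contra hc
    have : q - r = 0 := by omega
    rw [hn, this] at hpos; simp at hpos
  have hSqm : S r (q * m) ≤ q * S r m ∧ 0 < S r (q * m) := by
    rcases Nat.eq_zero_or_pos e with he0 | hepos
    · have hmeq : m = t := by rw [← hmt, he0]; ring
      have h1 : S r (q * m) = (q - r) * S r t := by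
        rw [hmeq]
        have := S_ppow_mul r q 1 t hq one_ne_zero ht0 hqt
        simpa using this
      constructor
      · rw [h1, hmeq]
        exact Nat.mul_le_mul_right _ (by omega)
      · rw [h1]
        have hSt : 0 < S r t := by rw [hmeq] at hSm; exact hSm
        exact Nat.mul_pos (by omega) hSt
    · have h1 : S r (q * m) = q ^ e * (q - r) * S r t := by
        rw [← hmt, ← mul_assoc, ← pow_succ']
        rw [S_ppow_mul r q (e + 1) t hq (by omega) ht0 hqt]
        simp
      have h2 : S r m = q ^ (e - 1) * (q - r) * S r t := by
        rw [← hmt]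
        exact S_ppow_mul r q e t hq (by omega) ht0 hqt
      have h3 : S r (q * m) = q * S r m := by
        rw [h1, h2]
        have : q ^ e = q * q ^ (e - 1) := by
          rw [← pow_succ']; congr 1; omega
        rw [this]; ring
      exact ⟨le_of_eq h3, by rw [h3]; exact Nat.mul_pos hq.pos hSm⟩
  have hlt : q ^ α * γ < q * m := by
    calc q ^ α * γ = q * (q ^ (α - 1) * γ) := by
          rw [← mul_assoc, ← pow_succ']; congr 2; omega
      _ < q * m := by
          exact Nat.mul_lt_mul_of_le_of_lt (le_refl q) hm hq.pos
  have hchain := hmin (q * m) hlt hSqm.2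
  rw [key] at hchain
  have : q * S r (q ^ (α - 1) * γ) < q * S r m := lt_of_lt_of_le hchain hSqm.1
  exact lt_of_mul_lt_mul_left this (Nat.zero_le q)
end

section
/- For a prime p and a positive integer r, p is a sparsely Schemmel totient number of order r if and only if r < p < (p_{b(r)+1} − r)(p_{b(r)+2} − r) + r. -/
namespace TwoPrimesAux

section RealPart
open Real

theorem real_main_inequality {x : ℝ} (x_large : (512 : ℝ) ≤ x) :
    (2 * x) * x * (2 * x) ^ √(2 * x) * 4 ^ (2 * x / 3) ≤ 4 ^ x := by
  let f : ℝ → ℝ := fun x => log (2 * x) + log x + √(2 * x) * log (2 * x) - log 4 / 3 * x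
  have hf' : ∀ x, 0 < x → 0 < (2 * x) * x * (2 * x) ^ √(2 * x) / 4 ^ (x / 3) := fun x h =>
    div_pos (mul_pos (mul_pos (by linarith) h) (rpow_pos_of_pos (mul_pos two_pos h) _))
      (rpow_pos_of_pos four_pos _)
  have hf : ∀ x, 0 < x → f x = log ((2 * x) * x * (2 * x) ^ √(2 * x) / 4 ^ (x / 3)) := by
    intro x h5
    have h6 := mul_pos (zero_lt_two' ℝ) h5
    have h7 := rpow_pos_of_pos h6 (√(2 * x))
    rw [log_div (mul_pos (mul_pos h6 h5) h7).ne' (rpow_pos_of_pos four_pos _).ne',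
      log_mul (mul_pos h6 h5).ne' h7.ne', log_mul h6.ne' h5.ne',
      log_rpow h6, log_rpow zero_lt_four, ← mul_div_right_comm, ← mul_div, mul_comm x]
  have h5 : 0 < x := lt_of_lt_of_le (by norm_num1) x_large
  rw [← div_le_one (rpow_pos_of_pos four_pos x), ← div_div_eq_mul_div, ← rpow_sub four_pos, ←
    mul_div 2 x, mul_div_left_comm, ← mul_one_sub, (by norm_num1 : (1 : ℝ) - 2 / 3 = 1 / 3),
    mul_one_div, ← log_nonpos_iff (hf' x h5).le, ← hf x h5]
  have hconc2 : ConcaveOn ℝ (Set.Ioi (0.5:ℝ)) (fun x : ℝ => log (2 * x)) := by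
    have h2 := strictConcaveOn_log_Ioi.concaveOn.comp_linearMap ((2 : ℝ) • LinearMap.id)
    have hsub : Set.Ioi (0.5:ℝ) ⊆ ⇑((2 : ℝ) • LinearMap.id (R := ℝ) (M := ℝ)) ⁻¹' (Set.Ioi 0) := by
      intro y hy
      simp only [Set.mem_preimage, LinearMap.smul_apply, LinearMap.id_coe, id_eq, smul_eq_mul,
        Set.mem_Ioi] at hy ⊢
      linarith
    have h3 := h2.subset hsub (convex_Ioi (0.5 : ℝ))
    convert h3 using 1
    · rfl
    · rfl
    · ext y; simp
  have h : ConcaveOn ℝ (Set.Ioi 0.5) f := by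
    apply ConcaveOn.sub
    · apply ConcaveOn.add
      · apply ConcaveOn.add
        · exact hconc2
        · exact strictConcaveOn_log_Ioi.concaveOn.subset
            (Set.Ioi_subset_Ioi (by norm_num)) (convex_Ioi 0.5)
      · convert ((strictConcaveOn_sqrt_mul_log_Ioi.concaveOn.comp_linearMap
          ((2 : ℝ) • LinearMap.id))) using 1
        · rfl
        · rfl
        ext x
        simp only [Set.mem_Ioi, Set.mem_preimage, LinearMap.smul_apply,
          LinearMap.id_coe, id_eq, smul_eq_mul]
        rw [← mul_lt_mul_iff_right₀ (two_pos)]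
        norm_num1
        rfl
        ext y; simp
    apply ConvexOn.smul
    · refine div_nonneg (log_nonneg (by norm_num1)) (by norm_num1)
    · exact convexOn_id (convex_Ioi (0.5 : ℝ))
  suffices ∃ x1 x2, 0.5 < x1 ∧ x1 < x2 ∧ x2 ≤ x ∧ 0 ≤ f x1 ∧ f x2 ≤ 0 by
    obtain ⟨x1, x2, h1, h2, h0, h3, h4⟩ := this
    exact (h.right_le_of_le_left'' h1 ((h1.trans h2).trans_le h0) h2 h0 (h4.trans h3)).trans h4
  refine ⟨18, 512, by norm_num1, by norm_num1, x_large, ?_, ?_⟩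
  · have h36 : √(2 * 18 : ℝ) = 6 := (sqrt_eq_iff_mul_self_eq_of_pos (by norm_num1)).mpr (by norm_num1)
    show (0:ℝ) ≤ log (2 * 18) + log 18 + √(2 * 18) * log (2 * 18) - log 4 / 3 * 18
    rw [h36, show ((2:ℝ) * 18) = 36 by norm_num1]
    have l1 : log 4 ≤ log 18 := log_le_log (by norm_num1) (by norm_num1)
    have l2 : log 4 ≤ log (36:ℝ) := log_le_log (by norm_num1) (by norm_num1)
    have l4 : (0:ℝ) ≤ log 4 := log_nonneg (by norm_num1)
    linarith
  · have h32 : √(2 * 512 : ℝ) = 32 :=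
      (sqrt_eq_iff_mul_self_eq_of_pos (by norm_num1)).mpr (by norm_num1)
    show log (2 * 512) + log 512 + √(2 * 512) * log (2 * 512) - log 4 / 3 * 512 ≤ 0
    rw [h32, show ((2:ℝ) * 512) = 1024 by norm_num1]
    have e1 : log (1024 : ℝ) = 10 * log 2 := by
      rw [show (1024 : ℝ) = 2 ^ (10:ℕ) by norm_num1, log_pow]; push_cast; ring
    have e2 : log (512 : ℝ) = 9 * log 2 := by
      rw [show (512 : ℝ) = 2 ^ (9:ℕ) by norm_num1, log_pow]; push_cast; ring
    have e3 : log (4 : ℝ) = 2 * log 2 := by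
      rw [show (4 : ℝ) = 2 ^ (2:ℕ) by norm_num1, log_pow]; push_cast; ring
    have l4 : (0:ℝ) ≤ log 2 := log_nonneg (by norm_num1)
    rw [e1, e2, e3]
    linarith

end RealPart

open Nat

theorem main_inequality {n : ℕ} (n_large : 512 ≤ n) :
    (2 * n) * n * (2 * n) ^ Nat.sqrt (2 * n) * 4 ^ (2 * n / 3) ≤ 4 ^ n := by
  rw [← @Nat.cast_le ℝ]
  simp only [Nat.cast_mul, Nat.cast_pow, Nat.cast_ofNat, ← Real.rpow_natCast]
  refine _root_.trans ?_ (real_main_inequality (by exact_mod_cast n_large))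
  have h1 : (1:ℝ) ≤ 2 * (n:ℝ) := by
    have : (1:ℝ) ≤ (n:ℝ) := by exact_mod_cast Nat.one_le_iff_ne_zero.mpr (by omega)
    linarith
  gcongr
  · exact_mod_cast Real.nat_sqrt_le_real_sqrt
  · norm_num1
  · exact Nat.cast_div_le.trans (by norm_cast)

theorem centralBinom_le_of_no_two_primes (n : ℕ) (n_big : 2 < n)
    (no_two : ¬∃ s t : ℕ, s.Prime ∧ t.Prime ∧ s < t ∧ n < s ∧ t ≤ 2 * n) :
    centralBinom n ≤ ((2 * n) ^ Nat.sqrt (2 * n) * 4 ^ (2 * n / 3)) * (2 * n) := by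
  have n_pos : 0 < n := by omega
  have n2_pos : 1 ≤ 2 * n := by omega
  have hd3 : 3 * (2 * n / 3) ≤ 2 * n := by
    have := Nat.div_mul_le_self (2 * n) 3; omega
  have h23 : 2 * n / 3 + 1 ≤ 2 * n + 1 := by omega
  set f : ℕ → ℕ := fun x => x ^ (centralBinom n).factorization x with hf
  have hsplit : centralBinom n =
      (∏ x ∈ Finset.range (2 * n / 3 + 1), f x) * (∏ x ∈ Finset.Ico (2 * n / 3 + 1) (2 * n + 1), f x) := by
    rw [← n.prod_pow_factorization_centralBinom, Finset.range_eq_Ico,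
      ← Finset.prod_Ico_consecutive _ (Nat.zero_le (2 * n / 3 + 1)) h23]
    simp only [hf, Finset.range_eq_Ico]
  rw [hsplit]
  refine Nat.mul_le_mul ?_ ?_
  · -- part A: small primes
    let S := (Finset.range (2 * n / 3 + 1)).filter Nat.Prime
    have hSf : ∏ x ∈ S, f x = ∏ x ∈ Finset.range (2 * n / 3 + 1), f x := by
      refine Finset.prod_filter_of_ne fun p _ h => ?_
      contrapose! h; dsimp only [f]
      rw [Nat.factorization_eq_zero_of_not_prime n.centralBinom h, _root_.pow_zero]
    rw [← hSf, ← Finset.prod_filter_mul_prod_filter_not S (· ≤ Nat.sqrt (2 * n))]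
    apply Nat.mul_le_mul
    · refine (Finset.prod_le_prod' fun p _ => (?_ : f p ≤ 2 * n)).trans ?_
      · exact pow_factorization_choose_le (by omega)
      have hcard : (Finset.Icc 1 (Nat.sqrt (2 * n))).card = Nat.sqrt (2 * n) := by
        rw [Nat.card_Icc, Nat.add_sub_cancel]
      rw [Finset.prod_const]
      refine pow_right_mono₀ n2_pos ((Finset.card_le_card fun x hx => ?_).trans hcard.le)
      obtain ⟨h1, h2⟩ := Finset.mem_filter.1 hx
      exact Finset.mem_Icc.mpr ⟨(Finset.mem_filter.1 h1).2.one_lt.le, h2⟩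
    · refine le_trans ?_ (primorial_le_4_pow (2 * n / 3))
      refine (Finset.prod_le_prod' fun p hp => (?_ : f p ≤ p)).trans ?_
      · obtain ⟨h1, h2⟩ := Finset.mem_filter.1 hp
        refine (pow_right_mono₀ (Finset.mem_filter.1 h1).2.one_lt.le ?_).trans (pow_one p).le
        exact Nat.factorization_choose_le_one (Nat.sqrt_lt'.mp <| not_le.1 h2)
      refine Finset.prod_le_prod_of_subset_of_one_le' (Finset.filter_subset _ _) ?_
      exact fun p hp _ => (Finset.mem_filter.1 hp).2.one_lt.le
  · -- part B: the Ico part is at most 2*n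
    have hval : ∀ x ∈ Finset.Ico (2 * n / 3 + 1) (2 * n + 1), x.Prime → x ≤ n → f x = 1 := by
      intro x hx hxp hxn
      rw [Finset.mem_Ico] at hx
      have h3x : 2 * n < 3 * x := by
        have := (Nat.div_lt_iff_lt_mul (by norm_num : 0 < 3)).mp (by omega : 2 * n / 3 < x)
        omega
      dsimp only [f]
      rw [Nat.factorization_centralBinom_of_two_mul_self_lt_three_mul n_big hxn h3x, _root_.pow_zero]
    by_cases hs : ∃ s, s.Prime ∧ n < s ∧ s ≤ 2 * n
    · obtain ⟨s, hsp, hs1, hs2⟩ := hs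
      have hsmem : s ∈ Finset.Ico (2 * n / 3 + 1) (2 * n + 1) := by
        rw [Finset.mem_Ico]; omega
      rw [Finset.prod_eq_single_of_mem s hsmem ?_]
      · exact pow_factorization_choose_le (by omega)
      intro x hx hxs
      by_cases hxp : x.Prime
      · by_cases hxn : x ≤ n
        · exact hval x hx hxp hxn
        · exfalso
          push_neg at hxn
          rw [Finset.mem_Ico] at hx
          rcases lt_or_gt_of_ne hxs with h | h
          · exact no_two ⟨x, s, hxp, hsp, h, hxn, hs2⟩
          · exact no_two ⟨s, x, hsp, hxp, h, hs1, by omega⟩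
      · dsimp only [f]
        rw [Nat.factorization_eq_zero_of_not_prime n.centralBinom hxp, _root_.pow_zero]
    · push_neg at hs
      have : ∏ x ∈ Finset.Ico (2 * n / 3 + 1) (2 * n + 1), f x = 1 := by
        refine Finset.prod_eq_one fun x hx => ?_
        by_cases hxp : x.Prime
        · by_cases hxn : x ≤ n
          · exact hval x hx hxp hxn
          · exfalso
            rw [Finset.mem_Ico] at hx
            exact absurd (hs x hxp (by omega)) (by omega)
        · dsimp only [f]
          rw [Nat.factorization_eq_zero_of_not_prime n.centralBinom hxp, _root_.pow_zero]
      rw [this]; omega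

theorem two_primes_eventually (n : ℕ) (n_large : 512 ≤ n) :
    ∃ s t : ℕ, s.Prime ∧ t.Prime ∧ s < t ∧ n < s ∧ t ≤ 2 * n := by
  by_contra no_two
  have H1 : (2 * n) * n * (2 * n) ^ Nat.sqrt (2 * n) * 4 ^ (2 * n / 3) ≤ 4 ^ n :=
    main_inequality n_large
  have H2 : 4 ^ n < n * centralBinom n :=
    Nat.four_pow_lt_mul_centralBinom n (le_trans (by norm_num1) n_large)
  have H3 : centralBinom n ≤ ((2 * n) ^ Nat.sqrt (2 * n) * 4 ^ (2 * n / 3)) * (2 * n) :=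
    centralBinom_le_of_no_two_primes n (by omega) no_two
  have H4 : n * centralBinom n ≤ (2 * n) * n * (2 * n) ^ Nat.sqrt (2 * n) * 4 ^ (2 * n / 3) := by
    calc n * centralBinom n ≤ n * (((2 * n) ^ Nat.sqrt (2 * n) * 4 ^ (2 * n / 3)) * (2 * n)) :=
          Nat.mul_le_mul_left _ H3
      _ = (2 * n) * n * (2 * n) ^ Nat.sqrt (2 * n) * 4 ^ (2 * n / 3) := by ring
  exact lt_irrefl _ (H2.trans_le (H4.trans H1))

/-- Chain step for establishing the two-primes result for small `n`. -/
theorem two_primes_succ {n : ℕ} (q : ℕ) {p1 p2 : ℕ} (hp1 : p1.Prime) (hp2 : p2.Prime)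
    (h12 : p1 < p2) (covering : p2 ≤ 2 * q)
    (H : n < q → ∃ s t : ℕ, s.Prime ∧ t.Prime ∧ s < t ∧ n < s ∧ t ≤ 2 * n) (hn : n < p1) :
    ∃ s t : ℕ, s.Prime ∧ t.Prime ∧ s < t ∧ n < s ∧ t ≤ 2 * n := by
  by_cases h : p2 ≤ 2 * n
  · exact ⟨p1, p2, hp1, hp2, h12, hn, h⟩
  · exact H (by omega)

/-- There are at least two primes strictly between `n` and `2 n + 1`, for `n ≥ 6`. -/
theorem two_primes {n : ℕ} (hn : 6 ≤ n) :
    ∃ s t : ℕ, s.Prime ∧ t.Prime ∧ s < t ∧ n < s ∧ t ≤ 2 * n := by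
  cases' lt_or_ge n 512 with h h
  · replace h : n < 617 := by omega
    revert h
    refine fun h => two_primes_succ 311 (p2 := 619) (by norm_num) (by norm_num) (by norm_num) (by norm_num) ?_ h
    refine fun h => two_primes_succ 157 (p2 := 313) (by norm_num) (by norm_num) (by norm_num) (by norm_num) ?_ h
    refine fun h => two_primes_succ 83 (p2 := 163) (by norm_num) (by norm_num) (by norm_num) (by norm_num) ?_ h
    refine fun h => two_primes_succ 47 (p2 := 89) (by norm_num) (by norm_num) (by norm_num) (by norm_num) ?_ h
    refine fun h => two_primes_succ 29 (p2 := 53) (by norm_num) (by norm_num) (by norm_num) (by norm_num) ?_ h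
    refine fun h => two_primes_succ 17 (p2 := 31) (by norm_num) (by norm_num) (by norm_num) (by norm_num) ?_ h
    refine fun h => two_primes_succ 11 (p2 := 19) (by norm_num) (by norm_num) (by norm_num) (by norm_num) ?_ h
    refine fun h => two_primes_succ 7 (p2 := 13) (by norm_num) (by norm_num) (by norm_num) (by norm_num) ?_ h
    exact fun h => ⟨7, 11, by norm_num, by norm_num, by norm_num, by omega, by omega⟩
  · exact two_primes_eventually n h


open Nat


/-- smallest prime > r is `nth Prime (count Prime (r+1))`. -/
theorem lt_nth_count (r : ℕ) : r < Nat.nth Nat.Prime (Nat.count Nat.Prime (r + 1)) := by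
  have h := (Nat.count_le_iff_le_nth Nat.infinite_setOf_prime
    (a := r + 1) (b := Nat.count Nat.Prime (r + 1))).mp le_rfl
  exact Nat.lt_of_lt_of_le (Nat.lt_succ_self r) h

/-- any prime `x > r` is at least `nth Prime (count Prime (r+1))`. -/
theorem nth_count_le_of_prime {r x : ℕ} (hx : x.Prime) (hrx : r < x) :
    Nat.nth Nat.Prime (Nat.count Nat.Prime (r + 1)) ≤ x := by
  have h1 : Nat.count Nat.Prime (r + 1) ≤ Nat.count Nat.Prime x := Nat.count_monotone _ hrx
  calc Nat.nth Nat.Prime (Nat.count Nat.Prime (r + 1))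
      ≤ Nat.nth Nat.Prime (Nat.count Nat.Prime x) :=
        Nat.nth_monotone Nat.infinite_setOf_prime h1
    _ = x := Nat.nth_count hx

/-- any prime `x > nth Prime k` is at least `nth Prime (k+1)`. -/
theorem nth_succ_le_of_prime {k x : ℕ} (hx : x.Prime) (h : Nat.nth Nat.Prime k < x) :
    Nat.nth Nat.Prime (k + 1) ≤ x := by
  have h1 : k < Nat.count Nat.Prime x :=
    (Nat.lt_nth_iff_count_lt Nat.infinite_setOf_prime).mpr h
  calc Nat.nth Nat.Prime (k + 1) ≤ Nat.nth Nat.Prime (Nat.count Nat.Prime x) :=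
        Nat.nth_monotone Nat.infinite_setOf_prime h1
    _ = x := Nat.nth_count hx

theorem nth_prime_two_eq_five : Nat.nth Nat.Prime 2 = 5 := by
  have := Nat.nth_count (p := Nat.Prime) (n := 5) (by norm_num)
  simpa [show Nat.count Nat.Prime 5 = 2 by decide] using this

theorem nth_prime_three_eq_seven : Nat.nth Nat.Prime 3 = 7 := by
  have := Nat.nth_count (p := Nat.Prime) (n := 7) (by norm_num)
  simpa [show Nat.count Nat.Prime 7 = 3 by decide] using this

/-- the "star" fact: the second prime after `r` is at most the first prime after `r` plus `r`. -/
theorem star {r : ℕ} (hr : 1 ≤ r) :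
    Nat.nth Nat.Prime (Nat.count Nat.Prime (r + 1) + 1)
      ≤ Nat.nth Nat.Prime (Nat.count Nat.Prime (r + 1)) + r := by
  rcases lt_or_ge r 5 with h5 | h5
  · interval_cases r <;>
      simp_all [show Nat.count Nat.Prime 2 = 0 by decide, show Nat.count Nat.Prime 3 = 1 by decide,
        show Nat.count Nat.Prime 4 = 2 by decide, show Nat.count Nat.Prime 5 = 2 by decide,
        Nat.nth_prime_zero_eq_two, Nat.nth_prime_one_eq_three, nth_prime_two_eq_five,
        nth_prime_three_eq_seven]
  · -- r ≥ 5
    set k : ℕ := Nat.count Nat.Prime (r + 1) with hk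
    have hk3 : 3 ≤ k := by
      rw [hk]
      calc 3 = Nat.count Nat.Prime 6 := by decide
        _ ≤ Nat.count Nat.Prime (r + 1) := Nat.count_monotone _ (by omega)
    set u : ℕ := Nat.nth Nat.Prime (k - 1) with hu
    set v : ℕ := Nat.nth Nat.Prime k with hv
    have hup : u.Prime := Nat.prime_nth_prime _
    have hvp : v.Prime := Nat.prime_nth_prime _
    have huv : u < v := by
      rw [hu, hv]; exact Nat.nth_lt_nth Nat.infinite_setOf_prime |>.mpr (by omega)
    have hu5 : 5 ≤ u := by
      rw [hu, ← nth_prime_two_eq_five]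
      exact Nat.nth_monotone Nat.infinite_setOf_prime (by omega)
    have hv7 : 7 ≤ v := by
      rw [hv, ← nth_prime_three_eq_seven]
      exact Nat.nth_monotone Nat.infinite_setOf_prime (by omega)
    have hur : u ≤ r := by
      have := Nat.nth_lt_of_lt_count (p := Nat.Prime) (n := r + 1) (k := k - 1) (by omega)
      omega
    -- u and v are odd
    have huo : Odd u := hup.odd_of_ne_two (by omega)
    have hvo : Odd v := hvp.odd_of_ne_two (by omega)
    have heven : 2 ∣ (u + v) := by
      obtain ⟨a, ha⟩ := huo; obtain ⟨c, hc⟩ := hvo; omega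
    obtain ⟨m, hm⟩ := heven
    have hm6 : 6 ≤ m := by omega
    obtain ⟨s, t, hsp, htp, hst, hms, ht2m⟩ := two_primes hm6
    -- s is a prime > m ≥ u, hence s ≥ v
    have hsv : v ≤ s := by
      have h1 : Nat.nth Nat.Prime (k - 1) < s := by omega
      have := nth_succ_le_of_prime hsp h1
      rwa [show k - 1 + 1 = k by omega] at this
    have htw : Nat.nth Nat.Prime (k + 1) ≤ t := nth_succ_le_of_prime htp (by omega)
    omega


end TwoPrimesAux

namespace SSTAux


theorem S_prime (r : ℕ) {q : ℕ} (hq : q.Prime) : S r q = q - r := by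
  unfold S
  rw [hq.primeFactors, Finset.prod_singleton, hq.factorization, Finsupp.single_eq_same]
  simp

theorem S_prime_pow (r : ℕ) {s e : ℕ} (hs : s.Prime) (he : 1 ≤ e) :
    S r (s ^ e) = s ^ (e - 1) * (s - r) := by
  unfold S
  rw [Nat.primeFactors_prime_pow (by omega) hs, Finset.prod_singleton, hs.factorization_pow,
    Finsupp.single_eq_same]

theorem S_pp_mul (r : ℕ) {s t a : ℕ} (hs : s.Prime) (ht : t.Prime) (hst : s ≠ t) (ha : 1 ≤ a) :
    S r (s ^ a * t) = s ^ (a - 1) * (s - r) * (t - r) := by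
  unfold S
  have hsa : (s ^ a) ≠ 0 := pow_ne_zero _ hs.pos.ne'
  have hfact : (s ^ a * t).factorization = Finsupp.single s a + Finsupp.single t 1 := by
    rw [Nat.factorization_mul hsa ht.pos.ne', hs.factorization_pow, ht.factorization]
  rw [Nat.primeFactors_mul hsa ht.pos.ne', Nat.primeFactors_prime_pow (by omega) hs,
    ht.primeFactors, show ({s} ∪ {t} : Finset ℕ) = {s, t} from rfl, Finset.prod_insert (by simp [hst]),
    Finset.prod_singleton, hfact]
  simp [Finsupp.single_eq_of_ne hst, Finsupp.single_eq_of_ne (Ne.symm hst)]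

theorem S_pos_iff (r n : ℕ) : 0 < S r n ↔ ∀ p ∈ n.primeFactors, r < p := by
  unfold S
  rw [Nat.pos_iff_ne_zero, Finset.prod_ne_zero_iff]
  apply forall₂_congr
  intro p hp
  have hpp : p.Prime := Nat.prime_of_mem_primeFactors hp
  have hne : p ^ (n.factorization p - 1) ≠ 0 := pow_ne_zero _ hpp.pos.ne'
  constructor
  · intro h
    rcases mul_ne_zero_iff.mp h with ⟨_, h2⟩
    omega
  · intro h
    exact mul_ne_zero hne (by omega)

theorem S_lower {r n s t : ℕ} (hs : s ∈ n.primeFactors) (ht : t ∈ n.primeFactors) (hst : s ≠ t)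
    (hpos : ∀ p ∈ n.primeFactors, r < p) : (s - r) * (t - r) ≤ S r n := by
  unfold S
  have hsub : ({s, t} : Finset ℕ) ⊆ n.primeFactors := by
    intro x hx
    rcases Finset.mem_insert.mp hx with rfl | hx
    · exact hs
    · rw [Finset.mem_singleton] at hx; subst hx; exact ht
  calc (s - r) * (t - r)
      ≤ (s ^ (n.factorization s - 1) * (s - r)) * (t ^ (n.factorization t - 1) * (t - r)) := by
        have h1 : 0 < s ^ (n.factorization s - 1) :=
          pow_pos (Nat.prime_of_mem_primeFactors hs).pos _
        have h2 : 0 < t ^ (n.factorization t - 1) :=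
          pow_pos (Nat.prime_of_mem_primeFactors ht).pos _
        calc (s - r) * (t - r) ≤ (s ^ (n.factorization s - 1) * (s - r)) * (t - r) :=
              Nat.mul_le_mul_right _ (Nat.le_mul_of_pos_left _ h1)
          _ ≤ _ := Nat.mul_le_mul_left _ (Nat.le_mul_of_pos_left _ h2)
    _ = ∏ p ∈ ({s, t} : Finset ℕ), p ^ (n.factorization p - 1) * (p - r) :=
        (Finset.prod_pair (f := fun p => p ^ (n.factorization p - 1) * (p - r)) hst).symm
    _ ≤ _ := by
        refine Finset.prod_le_prod_of_subset_of_one_le' (f := fun p => p ^ (n.factorization p - 1) * (p - r)) hsub fun p hp _ => ?_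
        have := hpos p hp
        have : 0 < p ^ (n.factorization p - 1) :=
          pow_pos (Nat.prime_of_mem_primeFactors hp).pos _
        have : 0 < p - r := by have := hpos p hp; omega
        exact Nat.one_le_iff_ne_zero.mpr (mul_ne_zero (by omega) (by omega))


end SSTAux

namespace SSTMain

open TwoPrimesAux SSTAux


section Core

variable {r : ℕ} (hr : 1 ≤ r)

local notation "k" => Nat.count Nat.Prime (r + 1)
local notation "P1" => Nat.nth Nat.Prime k
local notation "P2" => Nat.nth Nat.Prime (k + 1)

include hr

/-- Backward direction core: every `m > q` in `B_r` has `S r m > q - r`. -/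
theorem lower_bound {q : ℕ} (hq : q.Prime) (hrq : r < q)
    (hqb : q < (P1 - r) * (P2 - r) + r) {m : ℕ} (hm : q < m) (hSm : 0 < S r m) :
    q - r < S r m := by
  have hP1 : (P1).Prime := Nat.prime_nth_prime _
  have hP2 : (P2).Prime := Nat.prime_nth_prime _
  have hrP1 : r < P1 := lt_nth_count r
  have hP1P2 : P1 < P2 :=
    (Nat.nth_lt_nth Nat.infinite_setOf_prime).mpr (Nat.lt_succ_self _)
  have hstar : P2 ≤ P1 + r := star hr
  have hq2 : 2 ≤ q := hq.two_le
  have hqD : q - r < (P1 - r) * (P2 - r) := by omega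
  have hpos := (S_pos_iff r m).mp hSm
  have hm0 : m ≠ 0 := by omega
  have hm1 : m ≠ 1 := by omega
  rcases Nat.lt_or_ge m.primeFactors.card 2 with hc | hc
  · rcases Nat.lt_or_ge m.primeFactors.card 1 with hc0 | hc1
    · exfalso
      have : m.primeFactors = ∅ := Finset.card_eq_zero.mp (Nat.lt_one_iff.mp hc0)
      rcases Nat.primeFactors_eq_empty.mp this with h | h <;> omega
    · -- exactly one prime factor: m = s ^ e
      obtain ⟨s, hsingle⟩ := Finset.card_eq_one.mp (Nat.le_antisymm (Nat.lt_succ_iff.mp hc) hc1)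
      have hsmem : s ∈ m.primeFactors := by rw [hsingle]; exact Finset.mem_singleton_self s
      have hsp : s.Prime := Nat.prime_of_mem_primeFactors hsmem
      have hrs : r < s := hpos s hsmem
      set e := m.factorization s with he_def
      have he : 1 ≤ e := by
        have : e ≠ 0 := by
          rw [he_def, ← Finsupp.mem_support_iff, Nat.support_factorization]
          exact hsmem
        omega
      have hmeq : m = s ^ e := by
        conv_lhs => rw [← Nat.factorization_prod_pow_eq_self hm0]
        rw [Finsupp.prod, Nat.support_factorization, hsingle, Finset.prod_singleton]
      have hSval : S r m = s ^ (e - 1) * (s - r) := by rw [hmeq]; exact S_prime_pow r hsp he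
      rcases Nat.lt_or_ge e 2 with he1 | he2
      · -- e = 1 : m = s
        have : e = 1 := by omega
        rw [hSval, this]
        simp only [Nat.sub_self, pow_zero, one_mul]
        have : q < s := by rw [hmeq, this, pow_one] at hm; exact hm
        omega
      · -- e ≥ 2
        have hse : s ≤ s ^ (e - 1) := by
          calc s = s ^ 1 := (pow_one s).symm
            _ ≤ s ^ (e - 1) := Nat.pow_le_pow_right hsp.pos (by omega)
        have hkey : s * (s - r) ≤ S r m := by
          rw [hSval]; exact Nat.mul_le_mul_right _ hse
        rcases eq_or_ne s P1 with rfl | hsP1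
        · -- s = P1 : use star
          have h1 : (P1 - r) * (P2 - r) ≤ P1 * (P1 - r) := by
            calc (P1 - r) * (P2 - r) ≤ (P1 - r) * P1 := Nat.mul_le_mul_left _ (by omega)
              _ = P1 * (P1 - r) := Nat.mul_comm _ _
          omega
        · -- s ≥ P2
          have hs1 : P1 ≤ s := nth_count_le_of_prime hsp hrs
          have hs2 : P2 ≤ s := nth_succ_le_of_prime hsp (by omega)
          have h1 : (P1 - r) * (P2 - r) ≤ s * (s - r) := by
            calc (P1 - r) * (P2 - r) ≤ s * (P2 - r) := Nat.mul_le_mul_right _ (by omega)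
              _ ≤ s * (s - r) := Nat.mul_le_mul_left _ (by omega)
          omega
  · -- at least two distinct prime factors
    obtain ⟨a, ha, bb, hb, hab⟩ := Finset.one_lt_card.mp hc
    have hap : a.Prime := Nat.prime_of_mem_primeFactors ha
    have hbp : bb.Prime := Nat.prime_of_mem_primeFactors hb
    have hra : r < a := hpos a ha
    have hrb : r < bb := hpos bb hb
    -- order them
    rcases lt_or_gt_of_ne hab with h | h
    · have hlow := S_lower ha hb hab hpos
      have ha1 : P1 ≤ a := nth_count_le_of_prime hap hra
      have hb2 : P2 ≤ bb := nth_succ_le_of_prime hbp (by omega)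
      have h1 : (P1 - r) * (P2 - r) ≤ (a - r) * (bb - r) :=
        Nat.mul_le_mul (by omega) (by omega)
      omega
    · have hlow := S_lower hb ha (Ne.symm hab) hpos
      have ha1 : P1 ≤ bb := nth_count_le_of_prime hbp hrb
      have hb2 : P2 ≤ a := nth_succ_le_of_prime hap (by omega)
      have h1 : (P1 - r) * (P2 - r) ≤ (bb - r) * (a - r) :=
        Nat.mul_le_mul (by omega) (by omega)
      omega

/-- Forward direction core: for `q` beyond the bound there is a witness `m`. -/
theorem witness {q : ℕ} (hq' : (P1 - r) * (P2 - r) + r ≤ q) :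
    ∃ m, q < m ∧ 0 < S r m ∧ S r m ≤ q - r := by
  have hP1 : (P1).Prime := Nat.prime_nth_prime _
  have hP2 : (P2).Prime := Nat.prime_nth_prime _
  have hrP1 : r < P1 := lt_nth_count r
  have hP1P2 : P1 < P2 :=
    (Nat.nth_lt_nth Nat.infinite_setOf_prime).mpr (Nat.lt_succ_self _)
  have hrP2 : r < P2 := by omega
  have hP1_le_2r : P1 ≤ 2 * r := by
    obtain ⟨x, hx, h1, h2⟩ := Nat.exists_prime_lt_and_le_two_mul r (by omega)
    have := nth_count_le_of_prime hx h1
    omega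
  by_cases hA : P1 = r + 1
  · -- bound is P2
    have hDP2 : (P1 - r) * (P2 - r) + r = P2 := by
      rw [hA]
      have h1 : r + 1 - r = 1 := by omega
      rw [h1, one_mul]
      have : r < P2 := by omega
      omega
    have hex : ∃ a : ℕ, q < P1 ^ a * P2 := by
      refine ⟨q, ?_⟩
      calc q < P1 ^ q := Nat.lt_pow_self hP1.one_lt
        _ ≤ P1 ^ q * P2 := Nat.le_mul_of_pos_right _ hP2.pos
    have ha : q < P1 ^ Nat.find hex * P2 := Nat.find_spec hex
    have ha1 : 1 ≤ Nat.find hex := by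
      by_contra h
      have h0 : Nat.find hex = 0 := by omega
      rw [h0, pow_zero, one_mul] at ha
      omega
    have hSval : S r (P1 ^ Nat.find hex * P2) = P1 ^ (Nat.find hex - 1) * (P2 - r) := by
      rw [S_pp_mul r hP1 hP2 (Nat.ne_of_lt hP1P2) ha1,
        show P1 - r = 1 by omega, mul_one]
    refine ⟨P1 ^ Nat.find hex * P2, ha, ?_, ?_⟩
    · rw [hSval]
      exact Nat.mul_pos (pow_pos hP1.pos _) (by omega)
    · rw [hSval]
      rcases Nat.lt_or_ge (Nat.find hex) 2 with ha2 | ha2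
      · have h1 : Nat.find hex = 1 := by omega
        rw [h1]
        simp only [Nat.sub_self, pow_zero, one_mul]
        omega
      · have hmin : ¬ (q < P1 ^ (Nat.find hex - 1) * P2) := Nat.find_min hex (by omega)
        push_neg at hmin
        refine Nat.le_sub_of_add_le ?_
        calc P1 ^ (Nat.find hex - 1) * (P2 - r) + r
            ≤ P1 ^ (Nat.find hex - 1) * (P2 - r) + P1 ^ (Nat.find hex - 1) * r :=
              Nat.add_le_add_left (Nat.le_mul_of_pos_left _ (pow_pos hP1.pos _)) _
          _ = P1 ^ (Nat.find hex - 1) * P2 := by rw [← Nat.mul_add]; congr 1; omega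
          _ ≤ q := hmin
  · -- P1 ≥ r + 2
    have hP1r2 : r + 2 ≤ P1 := by
      rcases Nat.lt_or_ge P1 (r + 2) with h | h
      · exact absurd (by omega : P1 = r + 1) hA
      · exact h
    by_cases hq2 : q < P1 * P2
    · have hSval : S r (P1 * P2) = (P1 - r) * (P2 - r) := by
        have h := S_pp_mul r hP1 hP2 (Nat.ne_of_lt hP1P2) (le_refl 1)
        simpa using h
      exact ⟨P1 * P2, hq2, by rw [hSval]; exact Nat.mul_pos (by omega) (by omega),
        by rw [hSval]; omega⟩
    · push_neg at hq2
      have hP2d : P2 ≤ q / P1 := (Nat.le_div_iff_mul_le hP1.pos).mpr (by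
        rw [Nat.mul_comm]; exact hq2)
      have hd0 : q / P1 ≠ 0 := by
        have := hP2.pos; omega
      obtain ⟨s, hsp, hs1, hs2⟩ := Nat.exists_prime_lt_and_le_two_mul (q / P1) hd0
      have hP1s : P1 ≠ s := by omega
      have hrs : r < s := by omega
      have hPd : P1 * (q / P1) ≤ q := by
        rw [Nat.mul_comm]; exact Nat.div_mul_le_self q P1
      have hq_lt : q < P1 * (q / P1) + P1 := by
        have h1 := Nat.div_add_mod q P1
        have h2 : q % P1 < P1 := Nat.mod_lt _ hP1.pos
        omega
      have hm : q < P1 * s := by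
        calc q < P1 * (q / P1) + P1 := hq_lt
          _ = P1 * (q / P1 + 1) := by ring
          _ ≤ P1 * s := Nat.mul_le_mul_left _ (by omega)
      have hSval : S r (P1 * s) = (P1 - r) * (s - r) := by
        have h := S_pp_mul r hP1 hsp hP1s (le_refl 1)
        simpa using h
      refine ⟨P1 * s, hm, ?_, ?_⟩
      · rw [hSval]
        exact Nat.mul_pos (by omega) (by omega)
      · rw [hSval]
        refine Nat.le_sub_of_add_le ?_
        have h1 : r ≤ P1 := by omega
        have h2 : r ≤ s := by omega
        zify [h1, h2]
        have z1 : (s : ℤ) ≤ 2 * (q / P1 : ℕ) := by exact_mod_cast hs2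
        have z2 : ((P1 : ℕ) : ℤ) * ((q / P1 : ℕ) : ℤ) ≤ (q : ℤ) := by exact_mod_cast hPd
        have z3 : ((P2 : ℕ) : ℤ) ≤ ((q / P1 : ℕ) : ℤ) := by exact_mod_cast hP2d
        have z4 : (r : ℤ) + 2 ≤ (P1 : ℤ) := by exact_mod_cast hP1r2
        have z5 : ((P1 : ℕ) : ℤ) ≤ 2 * (r : ℤ) := by exact_mod_cast hP1_le_2r
        have z6 : ((P1 : ℕ) : ℤ) < ((P2 : ℕ) : ℤ) := by exact_mod_cast hP1P2
        have z7 : (1 : ℤ) ≤ (r : ℤ) := by exact_mod_cast hr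
        have z8 : (r : ℤ) < (s : ℤ) := by exact_mod_cast hrs
        nlinarith [mul_nonneg (by linarith : (0:ℤ) ≤ 2 * (r:ℤ) - (P1:ℤ))
            (by positivity : (0:ℤ) ≤ ((q / P1 : ℕ) : ℤ)),
          mul_nonneg (by linarith : (0:ℤ) ≤ ((P1:ℕ):ℤ) - (r:ℤ))
            (by linarith : (0:ℤ) ≤ 2 * ((q / P1 : ℕ) : ℤ) - (s:ℤ))]

end Core


end SSTMain

theorem stmt6 (q r : ℕ) (hq : q.Prime) (hr : 0 < r) :
    SST r q ↔ (r < q ∧ q < (p (b r + 1) - r) * (p (b r + 2) - r) + r) := by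
  have hb : b r = Nat.count Nat.Prime (r + 1) := by
    rw [b, Nat.count_eq_card_filter_range]
  have hp1 : p (b r + 1) = Nat.nth Nat.Prime (Nat.count Nat.Prime (r + 1)) := by
    rw [p, hb]
    norm_num
  have hp2 : p (b r + 2) = Nat.nth Nat.Prime (Nat.count Nat.Prime (r + 1) + 1) := by
    rw [p, hb]
    norm_num
  rw [hp1, hp2]
  have hSq : S r q = q - r := SSTAux.S_prime r hq
  constructor
  · rintro ⟨h1, h2⟩
    have hrq : r < q := by rw [hSq] at h1; omega
    refine ⟨hrq, ?_⟩
    by_contra hbnd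
    push_neg at hbnd
    obtain ⟨m, hm1, hm2, hm3⟩ := SSTMain.witness hr hbnd
    have := h2 m hm1 hm2
    rw [hSq] at this
    omega
  · rintro ⟨hrq, hqb⟩
    constructor
    · rw [hSq]; omega
    · intro m hm hSm
      rw [hSq]
      exact SSTMain.lower_bound hr hq hrq hqb hm hSm
end

section
/- For every positive integer r, the square of the smallest prime greater than r, p_{b(r)+1}^2, is not a sparsely Schemmel totient number of order r. -/
section SST7Aux

open Nat

/-- Kummer-style vanishing: if `p² > n` and the base-`p` digits of `k` and `n-k` don't carry
in the first digit, then `p` does not divide `n.choose k`. -/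
theorem kummer_zero {p n k : ℕ} (hkn : k ≤ n) (hsq : n < p ^ 2)
    (h : k % p + (n - k) % p < p) : (Nat.choose n k).factorization p = 0 := by
  cases' em' p.Prime with hp hp
  · exact Nat.factorization_eq_zero_of_not_prime (Nat.choose n k) hp
  rw [Nat.factorization_def _ hp, @padicValNat_def _ ⟨hp⟩ _ (Nat.choose_pos hkn).ne',
    ← emultiplicity_eq_zero_iff_multiplicity_eq_zero]
  simp only [hp.emultiplicity_choose hkn (lt_add_one _), Nat.cast_eq_zero, Finset.card_eq_zero,
    Finset.filter_eq_empty_iff, not_le]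
  intro i hi
  rcases eq_or_lt_of_le (Finset.mem_Ico.mp hi).1 with (rfl | hi2)
  · simpa using h
  · have hpi : n < p ^ i := lt_of_lt_of_le hsq (Nat.pow_le_pow_right hp.pos hi2)
    calc k % p ^ i + (n - k) % p ^ i ≤ k + (n - k) := Nat.add_le_add (Nat.mod_le _ _) (Nat.mod_le _ _)
      _ = n := Nat.add_sub_cancel' hkn
      _ < p ^ i := hpi

theorem step_up {n j : ℕ} (h : j < 2 * n) :
    (3 * n).choose j * 2 ^ j ≤ (3 * n).choose (j + 1) * 2 ^ (j + 1) := by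
  have key : (3 * n).choose (j + 1) * (j + 1) = (3 * n).choose j * (3 * n - j) :=
    Nat.choose_succ_right_eq _ _
  have h3 : (3 * n).choose j ≤ 2 * (3 * n).choose (j + 1) := by
    have hpos : 0 < 3 * n - j := by omega
    apply Nat.le_of_mul_le_mul_right _ hpos
    calc (3 * n).choose j * (3 * n - j) = (3 * n).choose (j + 1) * (j + 1) := key.symm
      _ ≤ (3 * n).choose (j + 1) * (2 * (3 * n - j)) := Nat.mul_le_mul_left _ (by omega)
      _ = 2 * (3 * n).choose (j + 1) * (3 * n - j) := by ring
  calc (3 * n).choose j * 2 ^ j ≤ 2 * (3 * n).choose (j + 1) * 2 ^ j :=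
        Nat.mul_le_mul_right _ h3
    _ = (3 * n).choose (j + 1) * 2 ^ (j + 1) := by ring

theorem step_down {n j : ℕ} (h : 2 * n ≤ j) :
    (3 * n).choose (j + 1) * 2 ^ (j + 1) ≤ (3 * n).choose j * 2 ^ j := by
  have key : (3 * n).choose (j + 1) * (j + 1) = (3 * n).choose j * (3 * n - j) :=
    Nat.choose_succ_right_eq _ _
  have h3 : 2 * (3 * n).choose (j + 1) ≤ (3 * n).choose j := by
    apply Nat.le_of_mul_le_mul_right _ (show 0 < j + 1 by omega)
    calc 2 * (3 * n).choose (j + 1) * (j + 1) = ((3 * n).choose (j + 1) * (j + 1)) * 2 := by ring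
      _ = (3 * n).choose j * (3 * n - j) * 2 := by rw [key]
      _ = (3 * n).choose j * (2 * (3 * n - j)) := by ring
      _ ≤ (3 * n).choose j * (j + 1) := Nat.mul_le_mul_left _ (by omega)
  calc (3 * n).choose (j + 1) * 2 ^ (j + 1) = 2 * (3 * n).choose (j + 1) * 2 ^ j := by ring
    _ ≤ (3 * n).choose j * 2 ^ j := Nat.mul_le_mul_right _ h3

theorem le_max_term (n j : ℕ) :
    (3 * n).choose j * 2 ^ j ≤ (3 * n).choose (2 * n) * 2 ^ (2 * n) := by
  rcases le_or_gt j (2 * n) with hj | hj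
  · obtain ⟨d, hd⟩ : ∃ d, j + d = 2 * n := ⟨2 * n - j, by omega⟩
    clear hj
    induction d generalizing j with
    | zero => simp_all
    | succ d ih =>
      calc (3 * n).choose j * 2 ^ j ≤ (3 * n).choose (j + 1) * 2 ^ (j + 1) :=
            step_up (by omega)
        _ ≤ _ := ih (j + 1) (by omega)
  · obtain ⟨d, hd⟩ : ∃ d, j = 2 * n + d := ⟨j - 2 * n, by omega⟩
    subst hd
    clear hj
    induction d with
    | zero => rfl
    | succ d ih =>
      calc (3 * n).choose (2 * n + (d + 1)) * 2 ^ (2 * n + (d + 1))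
          = (3 * n).choose ((2 * n + d) + 1) * 2 ^ ((2 * n + d) + 1) := by ring_nf
        _ ≤ (3 * n).choose (2 * n + d) * 2 ^ (2 * n + d) := step_down (by omega)
        _ ≤ _ := ih

/-- Lower bound: `3^(3n) ≤ (3n+1) * C(3n,n) * 4^n`. -/
theorem three_pow_le (n : ℕ) : 3 ^ (3 * n) ≤ (3 * n + 1) * ((3 * n).choose n * 2 ^ (2 * n)) := by
  have hsym : (3 * n).choose (2 * n) = (3 * n).choose n := by
    rw [show 2 * n = 3 * n - n by omega]
    exact Nat.choose_symm (by omega)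
  have hexp : (3 : ℕ) ^ (3 * n) = ∑ m ∈ Finset.range (3 * n + 1), 2 ^ m * (3 * n).choose m := by
    have := add_pow 2 1 (3 * n) (R := ℕ)
    simpa using this
  rw [hexp, ← hsym]
  calc ∑ m ∈ Finset.range (3 * n + 1), 2 ^ m * (3 * n).choose m
      ≤ ∑ _m ∈ Finset.range (3 * n + 1), (3 * n).choose (2 * n) * 2 ^ (2 * n) := by
        apply Finset.sum_le_sum
        intro i _
        rw [mul_comm]
        exact le_max_term n i
    _ = (3 * n + 1) * ((3 * n).choose (2 * n) * 2 ^ (2 * n)) := by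
        rw [Finset.sum_const, Finset.card_range]; ring

theorem region1_zero {p n : ℕ} (hn : 6 ≤ n) (hp1 : 3 * n < 4 * p) (hp2 : p ≤ n) :
    ((3 * n).choose n).factorization p = 0 := by
  have h1 : n % p = n - p := by
    rw [Nat.mod_eq_sub_mod (by omega), Nat.mod_eq_of_lt (by omega)]
  have h2 : (3 * n - n) % p = 2 * n - 2 * p := by
    rw [show 3 * n - n = 2 * n by omega, Nat.mod_eq_sub_mod (by omega),
      Nat.mod_eq_sub_mod (by omega), Nat.mod_eq_of_lt (by omega)]
    omega
  have hsq : n * (6 * n) ≤ n * (n * n) := Nat.mul_le_mul_left _ (Nat.mul_le_mul_right _ hn)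
  have hmul : (3 * n) * (3 * n) < (4 * p) * (4 * p) := Nat.mul_lt_mul'' hp1 hp1
  apply kummer_zero (by omega) (by nlinarith) (by omega)

theorem region2_zero {p n : ℕ} (hn : 2 ≤ n) (hp1 : 3 * n < 2 * p) (hp2 : p ≤ 2 * n) :
    ((3 * n).choose n).factorization p = 0 := by
  have h1 : n % p = n := Nat.mod_eq_of_lt (by omega)
  have h2 : (3 * n - n) % p = 2 * n - p := by
    rw [show 3 * n - n = 2 * n by omega, Nat.mod_eq_sub_mod (by omega),
      Nat.mod_eq_of_lt (by omega)]
  have hsq : n * (2 * n) ≤ n * (n * n) := Nat.mul_le_mul_left _ (Nat.mul_le_mul_right _ hn)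
  have hmul : (3 * n) * (3 * n) < (2 * p) * (2 * p) := Nat.mul_lt_mul'' hp1 hp1
  apply kummer_zero (by omega) (by nlinarith) (by omega)

/-- Upper bound on `C(3n, n)` when there are no primes in `(2n, 3n]`. -/
theorem X_le {n : ℕ} (hn : 20 ≤ n)
    (no_prime : ¬∃ p : ℕ, p.Prime ∧ 2 * n < p ∧ p ≤ 3 * n) :
    (3 * n).choose n ≤ (3 * n) ^ Nat.sqrt (3 * n) * 4 ^ (3 * n / 4) *
      ∏ p ∈ (Finset.Ioc n (3 * n / 2)).filter Nat.Prime, p := by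
  classical
  set ν : ℕ → ℕ := fun x => ((3 * n).choose n).factorization x with hν
  have hF1 : ∀ {x : ℕ}, x.Prime → ν x ≤ 1 → x ^ ν x ≤ x := fun hx h1 =>
    (Nat.pow_le_pow_right hx.one_lt.le h1).trans_eq (pow_one _)
  set S : Finset ℕ := (Finset.range (3 * n + 1)).filter Nat.Prime with hS
  have hX : (3 * n).choose n = ∏ x ∈ S, x ^ ν x := by
    rw [hS, Finset.prod_filter]
    rw [← Nat.prod_pow_factorization_choose (3 * n) n (by omega)]
    apply Finset.prod_congr rfl
    intro x _
    by_cases hx : x.Prime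
    · simp [hx, hν]
    · simp [hx, hν, Nat.factorization_eq_zero_of_not_prime _ hx]
  have hmem : ∀ x ∈ S, x.Prime ∧ x ≤ 3 * n := by
    intro x hx
    rw [hS, Finset.mem_filter, Finset.mem_range] at hx
    exact ⟨hx.2, by omega⟩
  rw [hX, ← Finset.prod_filter_mul_prod_filter_not S (· ≤ Nat.sqrt (3 * n))]
  have bound1 : ∏ x ∈ S.filter (· ≤ Nat.sqrt (3 * n)), x ^ ν x ≤ (3 * n) ^ Nat.sqrt (3 * n) := by
    refine (Finset.prod_le_prod' fun p _ => (?_ : p ^ ν p ≤ 3 * n)).trans ?_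
    · exact Nat.pow_factorization_choose_le (by omega)
    have hcard : (Finset.Icc 1 (Nat.sqrt (3 * n))).card = Nat.sqrt (3 * n) := by
      rw [Nat.card_Icc]; omega
    rw [Finset.prod_const]
    refine pow_le_pow_right₀ (by omega) ((Finset.card_le_card fun x hx => ?_).trans hcard.le)
    rw [Finset.mem_filter] at hx
    exact Finset.mem_Icc.mpr ⟨(hmem x hx.1).1.one_lt.le, hx.2⟩
  rw [mul_assoc]
  refine Nat.mul_le_mul bound1 ?_
  rw [← Finset.prod_filter_mul_prod_filter_not (Finset.filter _ S) (· ≤ 3 * n / 4)]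
  refine Nat.mul_le_mul ?_ ?_
  · -- primes in (sqrt(3n), 3n/4]
    refine le_trans ?_ (primorial_le_4_pow (3 * n / 4))
    refine (Finset.prod_le_prod' fun p hp => (?_ : p ^ ν p ≤ p)).trans ?_
    · simp only [Finset.mem_filter] at hp
      exact hF1 (hmem p hp.1.1).1
        (Nat.factorization_choose_le_one (Nat.sqrt_lt'.mp (not_le.1 hp.1.2)))
    · unfold primorial
      refine Finset.prod_le_prod_of_subset_of_one_le' ?_ (fun p hp _ => ?_)
      · intro x hx
        simp only [Finset.mem_filter] at hx
        rw [Finset.mem_filter]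
        exact ⟨Finset.mem_range.mpr (by omega), (hmem x hx.1.1).1⟩
      · rw [Finset.mem_filter] at hp
        exact hp.2.one_lt.le
  rw [← Finset.prod_filter_mul_prod_filter_not (Finset.filter _ (Finset.filter _ S)) (· ≤ n)]
  refine le_trans (Nat.mul_le_mul ?_ ?_) (le_of_eq (one_mul _))
  · -- primes in (3n/4, n] : exponent zero
    apply le_of_eq
    apply Finset.prod_eq_one
    intro x hx
    simp only [Finset.mem_filter, not_le] at hx
    simp only [hν]; rw [region1_zero (by omega) (by have := hx.1.2; omega) hx.2, pow_zero]
  rw [← Finset.prod_filter_mul_prod_filter_not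
    (Finset.filter _ (Finset.filter _ (Finset.filter _ S))) (· ≤ 3 * n / 2)]
  refine le_trans (Nat.mul_le_mul ?_ ?_) (le_of_eq (mul_one _))
  · -- primes in (n, 3n/2] : bounded by the product A
    refine (Finset.prod_le_prod' fun p hp => (?_ : p ^ ν p ≤ p)).trans ?_
    · simp only [Finset.mem_filter, not_le] at hp
      exact hF1 (hmem p hp.1.1.1.1).1
        (Nat.factorization_choose_le_one (Nat.sqrt_lt'.mp (by omega)))
    · refine Finset.prod_le_prod_of_subset_of_one_le' ?_ (fun p hp _ => ?_)
      · intro x hx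
        simp only [Finset.mem_filter, not_le] at hx
        rw [Finset.mem_filter, Finset.mem_Ioc]
        exact ⟨⟨hx.1.2, hx.2⟩, (hmem x hx.1.1.1.1).1⟩
      · rw [Finset.mem_filter] at hp
        exact hp.2.one_lt.le
  · -- primes in (3n/2, 3n] : none / exponent zero
    apply le_of_eq
    apply Finset.prod_eq_one
    intro x hx
    simp only [Finset.mem_filter, not_le] at hx
    have hprime := (hmem x hx.1.1.1.1).1
    have hle3n := (hmem x hx.1.1.1.1).2
    have hx2n : x ≤ 2 * n := by
      by_contra hcon
      exact no_prime ⟨x, hprime, not_le.1 hcon, hle3n⟩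
    simp only [hν]; rw [region2_zero (by omega) (by have := hx.2; omega) hx2n, pow_zero]

/-- Upper bound on `centralBinom K` keeping the top primes as a product. -/
theorem Y_le {K : ℕ} (hK : 20 ≤ K) :
    Nat.centralBinom K ≤ (2 * K) ^ Nat.sqrt (2 * K) * 4 ^ (2 * K / 3) *
      ∏ p ∈ (Finset.Ioc K (2 * K)).filter Nat.Prime, p := by
  classical
  set ν : ℕ → ℕ := fun x => (Nat.centralBinom K).factorization x with hν
  have hF1 : ∀ {x : ℕ}, x.Prime → ν x ≤ 1 → x ^ ν x ≤ x := fun hx h1 =>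
    (Nat.pow_le_pow_right hx.one_lt.le h1).trans_eq (pow_one _)
  set S : Finset ℕ := (Finset.range (2 * K + 1)).filter Nat.Prime with hS
  have hX : Nat.centralBinom K = ∏ x ∈ S, x ^ ν x := by
    rw [hS, Finset.prod_filter]
    rw [← Nat.prod_pow_factorization_centralBinom K]
    apply Finset.prod_congr rfl
    intro x _
    by_cases hx : x.Prime
    · simp [hx, hν]
    · simp [hx, hν, Nat.factorization_eq_zero_of_not_prime _ hx]
  have hmem : ∀ x ∈ S, x.Prime ∧ x ≤ 2 * K := by
    intro x hx
    rw [hS, Finset.mem_filter, Finset.mem_range] at hx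
    exact ⟨hx.2, by omega⟩
  rw [hX, ← Finset.prod_filter_mul_prod_filter_not S (· ≤ Nat.sqrt (2 * K))]
  have bound1 : ∏ x ∈ S.filter (· ≤ Nat.sqrt (2 * K)), x ^ ν x ≤ (2 * K) ^ Nat.sqrt (2 * K) := by
    refine (Finset.prod_le_prod' fun p _ => (?_ : p ^ ν p ≤ 2 * K)).trans ?_
    · exact Nat.pow_factorization_choose_le (by omega)
    have hcard : (Finset.Icc 1 (Nat.sqrt (2 * K))).card = Nat.sqrt (2 * K) := by
      rw [Nat.card_Icc]; omega
    rw [Finset.prod_const]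
    refine pow_le_pow_right₀ (by omega) ((Finset.card_le_card fun x hx => ?_).trans hcard.le)
    rw [Finset.mem_filter] at hx
    exact Finset.mem_Icc.mpr ⟨(hmem x hx.1).1.one_lt.le, hx.2⟩
  rw [mul_assoc]
  refine Nat.mul_le_mul bound1 ?_
  rw [← Finset.prod_filter_mul_prod_filter_not (Finset.filter _ S) (· ≤ 2 * K / 3)]
  refine Nat.mul_le_mul ?_ ?_
  · refine le_trans ?_ (primorial_le_4_pow (2 * K / 3))
    refine (Finset.prod_le_prod' fun p hp => (?_ : p ^ ν p ≤ p)).trans ?_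
    · simp only [Finset.mem_filter] at hp
      exact hF1 (hmem p hp.1.1).1
        (Nat.factorization_choose_le_one (Nat.sqrt_lt'.mp (not_le.1 hp.1.2)))
    · unfold primorial
      refine Finset.prod_le_prod_of_subset_of_one_le' ?_ (fun p hp _ => ?_)
      · intro x hx
        simp only [Finset.mem_filter] at hx
        rw [Finset.mem_filter]
        exact ⟨Finset.mem_range.mpr (by omega), (hmem x hx.1.1).1⟩
      · rw [Finset.mem_filter] at hp
        exact hp.2.one_lt.le
  rw [← Finset.prod_filter_mul_prod_filter_not (Finset.filter _ (Finset.filter _ S)) (· ≤ K)]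
  refine le_trans (Nat.mul_le_mul ?_ ?_) (le_of_eq (one_mul _))
  · -- primes in (2K/3, K] : exponent zero
    apply le_of_eq
    apply Finset.prod_eq_one
    intro x hx
    simp only [Finset.mem_filter, not_le] at hx
    simp only [hν]
    rw [Nat.factorization_centralBinom_of_two_mul_self_lt_three_mul (by omega) hx.2
      (by have := hx.1.2; omega), pow_zero]
  · -- primes in (K, 2K]
    refine (Finset.prod_le_prod' fun p hp => (?_ : p ^ ν p ≤ p)).trans ?_
    · simp only [Finset.mem_filter, not_le] at hp
      exact hF1 (hmem p hp.1.1.1).1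
        (Nat.factorization_choose_le_one (Nat.sqrt_lt'.mp (by omega)))
    · refine Finset.prod_le_prod_of_subset_of_one_le' ?_ (fun p hp _ => ?_)
      · intro x hx
        simp only [Finset.mem_filter, not_le] at hx
        rw [Finset.mem_filter, Finset.mem_Ioc]
        exact ⟨⟨hx.2, (hmem x hx.1.1.1).2⟩, (hmem x hx.1.1.1).1⟩
      · rw [Finset.mem_filter] at hp
        exact hp.2.one_lt.le

theorem AB_le {n : ℕ} (hn : 2 ≤ n)
    (no_prime : ¬∃ p : ℕ, p.Prime ∧ 2 * n < p ∧ p ≤ 3 * n) :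
    (∏ p ∈ (Finset.Ioc n (3 * n / 2)).filter Nat.Prime, p) *
      (∏ p ∈ (Finset.Ioc (3 * n / 2) (2 * (3 * n / 2))).filter Nat.Prime, p) ≤ 4 ^ n := by
  classical
  have hdisj : Disjoint ((Finset.Ioc n (3 * n / 2)).filter Nat.Prime)
      ((Finset.Ioc (3 * n / 2) (2 * (3 * n / 2))).filter Nat.Prime) := by
    rw [Finset.disjoint_left]
    intro a ha hb
    rw [Finset.mem_filter, Finset.mem_Ioc] at ha hb
    omega
  rw [← Finset.prod_union hdisj]
  have hU : ((Finset.Ioc n (3 * n / 2)).filter Nat.Prime) ∪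
      ((Finset.Ioc (3 * n / 2) (2 * (3 * n / 2))).filter Nat.Prime) =
      (Finset.Ioc n (2 * (3 * n / 2))).filter Nat.Prime := by
    rw [← Finset.filter_union]
    congr 1
    apply Finset.Ioc_union_Ioc_eq_Ioc <;> omega
  rw [hU]
  have hdvd : (∏ p ∈ (Finset.Ioc n (2 * (3 * n / 2))).filter Nat.Prime, p) ∣
      Nat.centralBinom n := by
    apply Finset.prod_primes_dvd
    · intro p hp
      rw [Finset.mem_filter] at hp
      exact hp.2.prime
    · intro p hp
      rw [Finset.mem_filter, Finset.mem_Ioc] at hp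
      have hp2n : p ≤ 2 * n := by
        by_contra hcon
        exact no_prime ⟨p, hp.2, not_le.1 hcon, by omega⟩
      have := hp.2.dvd_choose_add (a := n) (b := n) (by omega) (by omega) (by omega)
      rwa [show n + n = 2 * n by omega] at this
  have hle : Nat.centralBinom n ≤ 4 ^ n := by
    have h1 : Nat.centralBinom n ≤ ∑ i ∈ Finset.range (2 * n + 1), (2 * n).choose i :=
      Finset.single_le_sum (f := fun i => (2 * n).choose i) (fun _ _ => Nat.zero_le _)
        (Finset.mem_range.mpr (by omega))
    rw [Nat.sum_range_choose] at h1
    calc Nat.centralBinom n ≤ 2 ^ (2 * n) := h1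
      _ = 4 ^ n := by rw [pow_mul]; norm_num
  exact le_trans (Nat.le_of_dvd (Nat.centralBinom_pos n) hdvd) hle

theorem pow_aux : ∀ s : ℕ, (s + 27) * 2 ^ ((s + 27) / 2 + 2) + 21 ≤ 2 ^ (s + 21) := by
  intro s
  induction s using Nat.strong_induction_on with
  | _ s ih =>
    match s, ih with
    | 0, _ => norm_num
    | 1, _ => norm_num
    | (e + 2), ih =>
      have he := ih e (by omega)
      have hw : 1 ≤ 2 ^ ((e + 27) / 2 + 2) := Nat.one_le_two_pow
      have hpow : 2 ^ ((e + 2 + 27) / 2 + 2) = 2 * 2 ^ ((e + 27) / 2 + 2) := by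
        rw [show (e + 2 + 27) / 2 + 2 = ((e + 27) / 2 + 2) + 1 by omega, pow_succ]
        ring
      have hpow2 : 2 ^ (e + 2 + 21) = 4 * 2 ^ (e + 21) := by
        rw [show e + 2 + 21 = (e + 21) + 2 by omega, pow_add]
        ring
      rw [hpow, hpow2]
      nlinarith [he, hw]

/-- The core numeric inequality, for `n ≥ 2^23`. -/
theorem num_core {n : ℕ} (hn : 2 ^ 23 ≤ n) :
    (Nat.log 2 (3 * n + 1) + 1) * (2 * Nat.sqrt (3 * n) + 2) + 21 ≤ n / 4 := by
  set t := Nat.log 2 n with ht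
  have ht23 : 23 ≤ t := by
    calc 23 = Nat.log 2 (2 ^ 23) := (Nat.log_pow (by norm_num) _).symm
      _ ≤ t := Nat.log_mono_right hn
  have h2t : 2 ^ t ≤ n := Nat.pow_log_le_self 2 (by positivity)
  have hlt : n < 2 ^ (t + 1) := Nat.lt_pow_succ_log_self (by norm_num) n
  have h3n : 3 * n + 1 < 2 ^ (t + 3) := by
    have : (2 : ℕ) ^ (t + 3) = 4 * 2 ^ (t + 1) := by ring
    have h1 : 1 ≤ 2 ^ (t + 1) := Nat.one_le_two_pow
    omega
  have hL : Nat.log 2 (3 * n + 1) + 1 ≤ t + 3 := by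
    have := Nat.log_lt_of_lt_pow (show 3 * n + 1 ≠ 0 by omega) h3n
    omega
  set u := (t + 4) / 2 with hu
  have hs : Nat.sqrt (3 * n) < 2 ^ u := by
    by_contra hcon
    push_neg at hcon
    have h1 : 2 ^ u * 2 ^ u ≤ Nat.sqrt (3 * n) * Nat.sqrt (3 * n) :=
      Nat.mul_le_mul hcon hcon
    have h2 : Nat.sqrt (3 * n) * Nat.sqrt (3 * n) ≤ 3 * n := by
      simpa [pow_two] using Nat.sqrt_le' (3 * n)
    have h3 : (2 : ℕ) ^ u * 2 ^ u = 2 ^ (2 * u) := by rw [← pow_add]; ring_nf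
    have h4 : t + 3 ≤ 2 * u := by omega
    have h5 : (2 : ℕ) ^ (t + 3) ≤ 2 ^ (2 * u) := Nat.pow_le_pow_right (by norm_num) h4
    omega
  have key : (t + 4) * 2 ^ (u + 2) + 21 ≤ 2 ^ (t - 2) := by
    have := pow_aux (t - 23)
    have e1 : t - 23 + 27 = t + 4 := by omega
    have e2 : t - 23 + 21 = t - 2 := by omega
    rwa [e1, e2] at this
  have hfin : 2 ^ (t - 2) ≤ n / 4 := by
    have h := pow_add 2 (t - 2) 2
    rw [show t - 2 + 2 = t by omega] at h
    omega
  have hbound : (Nat.log 2 (3 * n + 1) + 1) * (2 * Nat.sqrt (3 * n) + 2) ≤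
      (t + 4) * 2 ^ (u + 2) := by
    apply Nat.mul_le_mul (by omega)
    have h1 : 1 ≤ 2 ^ u := Nat.one_le_two_pow
    have : (2 : ℕ) ^ (u + 2) = 4 * 2 ^ u := by ring
    omega
  omega

theorem num_final {n : ℕ} (hn : 2 ^ 23 ≤ n) :
    (3 * n + 1) * (3 * n / 2) * (3 * n) ^ Nat.sqrt (3 * n) *
      (2 * (3 * n / 2)) ^ Nat.sqrt (2 * (3 * n / 2)) * 2 ^ (2 * n) *
      4 ^ (3 * n / 4 + 2 * (3 * n / 2) / 3 + n) < 3 ^ (3 * n) * 4 ^ (3 * n / 2) := by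
  have hn0 : 2 ^ 23 ≤ 3 * n := by omega
  set K := 3 * n / 2 with hK
  set L := Nat.log 2 (3 * n + 1) + 1 with hL
  set s := Nat.sqrt (3 * n) with hs
  have b1 : 3 * n + 1 ≤ 2 ^ L := (Nat.lt_pow_succ_log_self (by norm_num) _).le
  have b2 : K ≤ 2 ^ L := by omega
  have b3 : (3 * n) ^ s ≤ 2 ^ (L * s) := by
    rw [pow_mul]
    exact Nat.pow_le_pow_left (by omega) s
  have b4 : (2 * K) ^ Nat.sqrt (2 * K) ≤ 2 ^ (L * s) := by
    have h2K : 2 * K ≤ 3 * n := by omega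
    have hs2 : Nat.sqrt (2 * K) ≤ s := Nat.sqrt_le_sqrt h2K
    calc (2 * K) ^ Nat.sqrt (2 * K) ≤ (3 * n) ^ Nat.sqrt (2 * K) :=
          Nat.pow_le_pow_left h2K _
      _ ≤ (3 * n) ^ s := Nat.pow_le_pow_right (by omega) hs2
      _ ≤ 2 ^ (L * s) := b3
  have b6 : (4 : ℕ) ^ (3 * n / 4 + 2 * K / 3 + n) = 2 ^ (2 * (3 * n / 4 + 2 * K / 3 + n)) := by
    rw [show (4 : ℕ) = 2 ^ 2 by norm_num, ← pow_mul]
  set M := 3 * n / 4 + 2 * K / 3 + n with hM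
  have step1 : (3 * n + 1) * K * (3 * n) ^ s * (2 * K) ^ Nat.sqrt (2 * K) * 2 ^ (2 * n) *
      4 ^ M ≤ 2 ^ (L + L + L * s + L * s + 2 * n + 2 * M) := by
    calc (3 * n + 1) * K * (3 * n) ^ s * (2 * K) ^ Nat.sqrt (2 * K) * 2 ^ (2 * n) * 4 ^ M
        ≤ 2 ^ L * 2 ^ L * 2 ^ (L * s) * 2 ^ (L * s) * 2 ^ (2 * n) * 2 ^ (2 * M) := by
          refine Nat.mul_le_mul (Nat.mul_le_mul (Nat.mul_le_mul (Nat.mul_le_mul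
            (Nat.mul_le_mul b1 b2) b3) b4) le_rfl) (le_of_eq b6)
      _ = 2 ^ (L + L + L * s + L * s + 2 * n + 2 * M) := by
          rw [← pow_add, ← pow_add, ← pow_add, ← pow_add, ← pow_add]
  have hcore : L * (2 * s + 2) + 21 ≤ n / 4 := by
    rw [hL, hs]; exact num_core hn
  have hexpand : L * (2 * s + 2) = 2 * (L * s) + 2 * L := by ring
  have step2 : L + L + L * s + L * s + 2 * n + 2 * M + 1 ≤ 19 * (n / 4) + 2 * K := by
    omega
  have step3 : (2 : ℕ) ^ (19 * (n / 4) + 2 * K) ≤ 3 ^ (3 * n) * 4 ^ K := by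
    rw [pow_add]
    refine Nat.mul_le_mul ?_ ?_
    · calc (2 : ℕ) ^ (19 * (n / 4)) = (2 ^ 19) ^ (n / 4) := by rw [← pow_mul]
        _ ≤ (3 ^ 12) ^ (n / 4) := Nat.pow_le_pow_left (by norm_num) _
        _ = 3 ^ (12 * (n / 4)) := by rw [← pow_mul]
        _ ≤ 3 ^ (3 * n) := Nat.pow_le_pow_right (by norm_num) (by omega)
    · rw [show (4 : ℕ) = 2 ^ 2 by norm_num, ← pow_mul]
  calc (3 * n + 1) * K * (3 * n) ^ s * (2 * K) ^ Nat.sqrt (2 * K) * 2 ^ (2 * n) * 4 ^ M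
      ≤ 2 ^ (L + L + L * s + L * s + 2 * n + 2 * M) := step1
    _ < 2 ^ (L + L + L * s + L * s + 2 * n + 2 * M + 1) :=
        Nat.pow_lt_pow_right (by norm_num) (by omega)
    _ ≤ 2 ^ (19 * (n / 4) + 2 * K) := Nat.pow_le_pow_right (by norm_num) step2
    _ ≤ 3 ^ (3 * n) * 4 ^ K := step3

/-- A prime in `(2n, 3n]`, for `n ≥ 2^23`. -/
theorem exists_prime_mul_two_lt_le_mul_three_eventually (n : ℕ) (hn : 2 ^ 23 ≤ n) :
    ∃ p : ℕ, p.Prime ∧ 2 * n < p ∧ p ≤ 3 * n := by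
  by_contra no_prime
  have h20 : 20 ≤ n := by omega
  set K := 3 * n / 2 with hK
  have hK20 : 20 ≤ K := by omega
  set A := ∏ p ∈ (Finset.Ioc n (3 * n / 2)).filter Nat.Prime, p with hA
  set B := ∏ p ∈ (Finset.Ioc (3 * n / 2) (2 * (3 * n / 2))).filter Nat.Prime, p with hB
  have H1 := three_pow_le n
  have H2 := X_le h20 no_prime
  have H3 := (Nat.four_pow_lt_mul_centralBinom K (by omega)).le
  have H4 := Y_le hK20
  have H5 := AB_le (by omega : 2 ≤ n) no_prime
  have chain : 3 ^ (3 * n) * 4 ^ K ≤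
      (3 * n + 1) * K * (3 * n) ^ Nat.sqrt (3 * n) * (2 * K) ^ Nat.sqrt (2 * K) *
        2 ^ (2 * n) * 4 ^ (3 * n / 4 + 2 * K / 3 + n) := by
    calc 3 ^ (3 * n) * 4 ^ K
        ≤ ((3 * n + 1) * ((3 * n).choose n * 2 ^ (2 * n))) * (K * Nat.centralBinom K) :=
          Nat.mul_le_mul H1 H3
      _ ≤ ((3 * n + 1) * (((3 * n) ^ Nat.sqrt (3 * n) * 4 ^ (3 * n / 4) * A) * 2 ^ (2 * n))) *
          (K * ((2 * K) ^ Nat.sqrt (2 * K) * 4 ^ (2 * K / 3) * B)) := by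
          exact Nat.mul_le_mul
            (Nat.mul_le_mul le_rfl (Nat.mul_le_mul H2 le_rfl))
            (Nat.mul_le_mul le_rfl H4)
      _ = ((3 * n + 1) * K * (3 * n) ^ Nat.sqrt (3 * n) * (2 * K) ^ Nat.sqrt (2 * K) *
          2 ^ (2 * n) * (4 ^ (3 * n / 4) * 4 ^ (2 * K / 3))) * (A * B) := by ring
      _ ≤ ((3 * n + 1) * K * (3 * n) ^ Nat.sqrt (3 * n) * (2 * K) ^ Nat.sqrt (2 * K) *
          2 ^ (2 * n) * (4 ^ (3 * n / 4) * 4 ^ (2 * K / 3))) * 4 ^ n :=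
          Nat.mul_le_mul le_rfl H5
      _ = (3 * n + 1) * K * (3 * n) ^ Nat.sqrt (3 * n) * (2 * K) ^ Nat.sqrt (2 * K) *
          2 ^ (2 * n) * 4 ^ (3 * n / 4 + 2 * K / 3 + n) := by
          rw [pow_add, pow_add]; ring
  exact absurd chain (not_le.mpr (num_final hn))

theorem chain_step_s7 {n p : ℕ} (q : ℕ) (hp : p.Prime) (hcov : 2 * p ≤ 3 * q + 1)
    (H : 2 * n < q → ∃ r : ℕ, r.Prime ∧ 2 * n < r ∧ r ≤ 3 * n) (hn : 2 * n < p) :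
    ∃ r : ℕ, r.Prime ∧ 2 * n < r ∧ r ≤ 3 * n := by
  by_cases h : p ≤ 3 * n
  · exact ⟨p, hp, hn, h⟩
  · exact H (by omega)

/-- There is a prime in `(2n, 3n]` for every `n ≥ 1`. -/
theorem exists_prime_mul_two_lt_le_mul_three (n : ℕ) (hn : 1 ≤ n) :
    ∃ p : ℕ, p.Prime ∧ 2 * n < p ∧ p ≤ 3 * n := by
  rcases le_or_gt (2 ^ 23) n with h | h
  · exact exists_prime_mul_two_lt_le_mul_three_eventually n h
  have h2 : 2 * n < 19198847 := by omega
  refine chain_step_s7 12799231 (by norm_num) (by norm_num) ?_ h2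
  clear h2; intro h2
  refine chain_step_s7 8532833 (by norm_num) (by norm_num) ?_ h2
  clear h2; intro h2
  refine chain_step_s7 5688577 (by norm_num) (by norm_num) ?_ h2
  clear h2; intro h2
  refine chain_step_s7 3792391 (by norm_num) (by norm_num) ?_ h2
  clear h2; intro h2
  refine chain_step_s7 2528269 (by norm_num) (by norm_num) ?_ h2
  clear h2; intro h2
  refine chain_step_s7 1685527 (by norm_num) (by norm_num) ?_ h2
  clear h2; intro h2
  refine chain_step_s7 1123693 (by norm_num) (by norm_num) ?_ h2
  clear h2; intro h2
  refine chain_step_s7 749129 (by norm_num) (by norm_num) ?_ h2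
  clear h2; intro h2
  refine chain_step_s7 499423 (by norm_num) (by norm_num) ?_ h2
  clear h2; intro h2
  refine chain_step_s7 332951 (by norm_num) (by norm_num) ?_ h2
  clear h2; intro h2
  refine chain_step_s7 221989 (by norm_num) (by norm_num) ?_ h2
  clear h2; intro h2
  refine chain_step_s7 147997 (by norm_num) (by norm_num) ?_ h2
  clear h2; intro h2
  refine chain_step_s7 98669 (by norm_num) (by norm_num) ?_ h2
  clear h2; intro h2
  refine chain_step_s7 65789 (by norm_num) (by norm_num) ?_ h2
  clear h2; intro h2
  refine chain_step_s7 43867 (by norm_num) (by norm_num) ?_ h2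
  clear h2; intro h2
  refine chain_step_s7 29251 (by norm_num) (by norm_num) ?_ h2
  clear h2; intro h2
  refine chain_step_s7 19507 (by norm_num) (by norm_num) ?_ h2
  clear h2; intro h2
  refine chain_step_s7 13009 (by norm_num) (by norm_num) ?_ h2
  clear h2; intro h2
  refine chain_step_s7 8681 (by norm_num) (by norm_num) ?_ h2
  clear h2; intro h2
  refine chain_step_s7 5791 (by norm_num) (by norm_num) ?_ h2
  clear h2; intro h2
  refine chain_step_s7 3863 (by norm_num) (by norm_num) ?_ h2
  clear h2; intro h2
  refine chain_step_s7 2579 (by norm_num) (by norm_num) ?_ h2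
  clear h2; intro h2
  refine chain_step_s7 1723 (by norm_num) (by norm_num) ?_ h2
  clear h2; intro h2
  refine chain_step_s7 1153 (by norm_num) (by norm_num) ?_ h2
  clear h2; intro h2
  refine chain_step_s7 773 (by norm_num) (by norm_num) ?_ h2
  clear h2; intro h2
  refine chain_step_s7 523 (by norm_num) (by norm_num) ?_ h2
  clear h2; intro h2
  refine chain_step_s7 349 (by norm_num) (by norm_num) ?_ h2
  clear h2; intro h2
  refine chain_step_s7 233 (by norm_num) (by norm_num) ?_ h2
  clear h2; intro h2
  refine chain_step_s7 157 (by norm_num) (by norm_num) ?_ h2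
  clear h2; intro h2
  refine chain_step_s7 107 (by norm_num) (by norm_num) ?_ h2
  clear h2; intro h2
  refine chain_step_s7 71 (by norm_num) (by norm_num) ?_ h2
  clear h2; intro h2
  refine chain_step_s7 47 (by norm_num) (by norm_num) ?_ h2
  clear h2; intro h2
  refine chain_step_s7 31 (by norm_num) (by norm_num) ?_ h2
  clear h2; intro h2
  refine chain_step_s7 23 (by norm_num) (by norm_num) ?_ h2
  clear h2; intro h2
  refine chain_step_s7 17 (by norm_num) (by norm_num) ?_ h2
  clear h2; intro h2
  refine chain_step_s7 11 (by norm_num) (by norm_num) ?_ h2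
  clear h2; intro h2
  refine chain_step_s7 7 (by norm_num) (by norm_num) ?_ h2
  clear h2; intro h2
  refine chain_step_s7 5 (by norm_num) (by norm_num) ?_ h2
  clear h2; intro h2
  refine chain_step_s7 3 (by norm_num) (by norm_num) ?_ h2
  clear h2; intro h2
  exact ⟨3, by norm_num, by omega, by omega⟩

theorem S_prime_sq {r Q : ℕ} (hQ : Q.Prime) : S r (Q ^ 2) = Q * (Q - r) := by
  unfold S
  rw [Nat.primeFactors_pow _ (by norm_num), hQ.primeFactors, Finset.prod_singleton,
    hQ.factorization_pow, Finsupp.single_eq_same]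
  norm_num

theorem S_prime_mul {r Q P : ℕ} (hQ : Q.Prime) (hP : P.Prime) (hne : Q ≠ P) :
    S r (Q * P) = (Q - r) * (P - r) := by
  unfold S
  have hfac : (Q * P).factorization = Q.factorization + P.factorization :=
    Nat.factorization_mul hQ.pos.ne' hP.pos.ne'
  rw [Nat.primeFactors_mul hQ.pos.ne' hP.pos.ne', hQ.primeFactors, hP.primeFactors,
    ← Finset.insert_eq, Finset.prod_insert (by simpa using hne), Finset.prod_singleton,
    hfac]
  rw [hQ.factorization, hP.factorization]
  simp only [Finsupp.add_apply, Finsupp.single_eq_same, Finsupp.single_eq_of_ne hne,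
    Finsupp.single_eq_of_ne (Ne.symm hne)]
  norm_num

theorem stmt7 (r : ℕ) (hr : 0 < r) : ¬ SST r (p (b r + 1) ^ 2) := by
  -- identify Q := p (b r + 1) as the smallest prime greater than r
  have hb : b r = Nat.count Nat.Prime (r + 1) := by
    rw [Nat.count_eq_card_filter_range]; rfl
  have hinf := Nat.infinite_setOf_prime
  set Q := p (b r + 1) with hQdef
  have hQnth : Q = Nat.nth Nat.Prime (b r) := by
    rw [hQdef]; unfold p; congr 1
  have hQ : Q.Prime := by rw [hQnth]; exact Nat.prime_nth_prime _
  have hrQ : r < Q := by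
    have : r + 1 ≤ Nat.nth Nat.Prime (b r) := by
      rw [← Nat.count_le_iff_le_nth hinf, ← hb]
    omega
  have hmin : ∀ P : ℕ, P.Prime → r < P → Q ≤ P := by
    intro P hP hrP
    have h1 : P = Nat.nth Nat.Prime (Nat.count Nat.Prime P) := (Nat.nth_count hP).symm
    have h2 : b r ≤ Nat.count Nat.Prime P := by
      rw [hb]; exact Nat.count_monotone _ (by omega)
    rw [hQnth, h1]
    exact Nat.nth_monotone hinf h2
  -- find a prime P with Q < P ≤ Q + r
  obtain ⟨P, hP, hQP, hPQr⟩ : ∃ P : ℕ, P.Prime ∧ Q < P ∧ P ≤ Q + r := by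
    rcases eq_or_ne Q 2 with h2 | h2
    · have hr1 : r = 1 := by omega
      exact ⟨3, by norm_num, by omega, by omega⟩
    · have hodd : Q % 2 = 1 := hQ.eq_two_or_odd.resolve_left h2
      have hQ3 : 3 ≤ Q := by
        have := hQ.two_le; omega
      set m := (Q + 1) / 2 with hm
      have hQm : Q = 2 * m - 1 ∧ 2 * m = Q + 1 := by omega
      -- r ≥ m via Bertrand
      have hrm : m ≤ r := by
        obtain ⟨P0, hP0, hP0a, hP0b⟩ :=
          Nat.exists_prime_lt_and_le_two_mul ((Q - 1) / 2) (by omega)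
        have hP0r : P0 ≤ r := by
          by_contra hcon
          have := hmin P0 hP0 (by omega)
          omega
        omega
      obtain ⟨P, hP, h2m, h3m⟩ := exists_prime_mul_two_lt_le_mul_three m (by omega)
      have hP3m : P ≠ 3 * m := by
        intro heq
        rcases (hP.eq_one_or_self_of_dvd 3 (by omega)) with h | h
        · omega
        · omega
      exact ⟨P, hP, by omega, by omega⟩
  -- contradiction with sparseness at m := Q * P
  intro hSST
  obtain ⟨hpos, hlt⟩ := hSST
  have hSQ2 : S r (Q ^ 2) = Q * (Q - r) := S_prime_sq hQ
  have hSQP : S r (Q * P) = (Q - r) * (P - r) := S_prime_mul hQ hP (by omega)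
  have hposQP : 0 < S r (Q * P) := by
    rw [hSQP]
    have h1 : 0 < Q - r := by omega
    have h2 : 0 < P - r := by omega
    positivity
  have hgt : Q ^ 2 < Q * P := by
    have := hQ.pos
    calc Q ^ 2 = Q * Q := sq Q
      _ < Q * P := Nat.mul_lt_mul_of_le_of_lt (le_refl Q) hQP this
  have := hlt (Q * P) hgt hposQP
  rw [hSQ2, hSQP] at this
  have hle : (Q - r) * (P - r) ≤ Q * (Q - r) := by
    calc (Q - r) * (P - r) ≤ (Q - r) * Q := Nat.mul_le_mul_left _ (by omega)
      _ = Q * (Q - r) := Nat.mul_comm _ _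
  omega

end SST7Aux
end

section
/- If p_{b(r)+1}^2 is a sparsely Schemmel totient number of order r, then r < p_{b(r)+2} − p_{b(r)+1}. -/
lemma S_sq (q r : ℕ) (hq : q.Prime) : S r (q^2) = q * (q - r) := by
  unfold S
  rw [Nat.primeFactors_prime_pow (by norm_num) hq, hq.factorization_pow]
  simp

lemma S_mul (q1 q2 r : ℕ) (h1 : q1.Prime) (h2 : q2.Prime) (hne : q1 ≠ q2) :
    S r (q1 * q2) = (q1 - r) * (q2 - r) := by
  unfold S
  rw [Nat.primeFactors_mul h1.ne_zero h2.ne_zero, h1.primeFactors, h2.primeFactors,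
    Finset.prod_union (by simpa using hne)]
  have hf : (q1 * q2).factorization = q1.factorization + q2.factorization :=
    Nat.factorization_mul h1.ne_zero h2.ne_zero
  simp [hf, h1.factorization, h2.factorization, Finsupp.single_apply, hne, hne.symm]

theorem stmt9 (r : ℕ) (hr : 0 < r) (h : SST r (p (b r + 1) ^ 2)) :
    r < p (b r + 2) - p (b r + 1) := by
  have hb : b r = Nat.count Nat.Prime (r + 1) := by
    rw [Nat.count_eq_card_filter_range]; rfl
  set q1 := p (b r + 1) with hq1
  set q2 := p (b r + 2) with hq2
  have hq1e : q1 = Nat.nth Nat.Prime (b r) := rfl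
  have hq2e : q2 = Nat.nth Nat.Prime (b r + 1) := rfl
  have hp1 : q1.Prime := Nat.nth_mem_of_infinite Nat.infinite_setOf_prime _
  have hp2 : q2.Prime := Nat.nth_mem_of_infinite Nat.infinite_setOf_prime _
  have hrq1 : r < q1 := by
    have := Nat.le_nth_count Nat.infinite_setOf_prime (r + 1)
    rw [← hb, ← hq1e] at this; omega
  have h12 : q1 < q2 := (Nat.nth_lt_nth Nat.infinite_setOf_prime).2 (Nat.lt_succ_self _)
  have hne : q1 ≠ q2 := h12.ne
  have hkey := h.2 (q1 * q2) (by nlinarith [hp1.pos]) (by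
    rw [S_mul _ _ _ hp1 hp2 hne]
    exact Nat.mul_pos (by omega) (by omega))
  rw [S_sq _ _ hp1, S_mul _ _ _ hp1 hp2 hne] at hkey
  have : q1 < q2 - r := by
    rw [mul_comm] at hkey
    exact Nat.lt_of_mul_lt_mul_left hkey
  omega
end

section
/- Let r be a positive integer and n a sparsely Schemmel totient number of order r with at least two distinct prime factors. Then P_1(n) < Q_1(n)·(1 − J_r + (J_r/r)·Q_1(n)), where P_1(n) is the largest prime divisor of n, Q_1(n) is the smallest prime greater than r not dividing n, and J_r = J(r#) is the Jacobsthal function of the primorial of r. -/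
lemma S_real {r t : ℕ} (ht : t ≠ 0) (hp : ∀ q ∈ t.primeFactors, r < q) :
    (S r t : ℝ) = t * ∏ q ∈ t.primeFactors, (1 - (r : ℝ) / q) := by
  have ht' : (t : ℝ) = ∏ q ∈ t.primeFactors, (q : ℝ) ^ t.factorization q := by
    conv_lhs => rw [← Nat.factorization_prod_pow_eq_self ht]
    rw [Finsupp.prod, Nat.support_factorization]
    push_cast
    rfl
  rw [S, ht', ← Finset.prod_mul_distrib, Nat.cast_prod]
  apply Finset.prod_congr rfl
  intro q hq
  have hqp : q.Prime := Nat.prime_of_mem_primeFactors hq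
  have hq0 : (q : ℝ) ≠ 0 := by exact_mod_cast hqp.ne_zero
  have he : 1 ≤ t.factorization q := (Nat.Prime.factorization_pos_of_dvd hqp ht
    (Nat.dvd_of_mem_primeFactors hq))
  have hrq : r ≤ q := le_of_lt (hp q hq)
  push_cast [Nat.cast_sub hrq]
  have hpow : (q : ℝ) ^ t.factorization q = (q : ℝ) ^ (t.factorization q - 1) * q := by
    rw [← pow_succ]
    congr 1
    omega
  rw [hpow]
  field_simp

lemma S_pos {r t : ℕ} (hp : ∀ q ∈ t.primeFactors, r < q) : 0 < S r t := by
  apply Finset.prod_pos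
  intro q hq
  have hqp : q.Prime := Nat.prime_of_mem_primeFactors hq
  exact Nat.mul_pos (pow_pos hqp.pos _) (Nat.sub_pos_of_lt (hp q hq))

set_option maxHeartbeats 1000000 in
theorem stmt11 (r n : ℕ) (hr : 0 < r) (h : SST r n)
    (hω : 2 ≤ n.primeFactors.card) :
    (Pk 1 n : ℝ) < (Qk r 1 n : ℝ) *
      (1 - (J (primorial r) : ℝ) + ((J (primorial r) : ℝ) / r) * (Qk r 1 n : ℝ)) := by
  obtain ⟨hS, hmin⟩ := h
  have hn0 : n ≠ 0 := by rintro rfl; simp at hω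
  have hpf : n.primeFactors.Nonempty := Finset.card_pos.mp (by omega)
  have hall : ∀ q ∈ n.primeFactors, r < q := by
    intro q hq
    by_contra hle
    have : S r n = 0 :=
      Finset.prod_eq_zero hq (by simp [Nat.sub_eq_zero_of_le (not_lt.mp hle)])
    omega
  -- P is the maximum prime factor
  set P := Pk 1 n with hPdef
  have hPmax : P = n.primeFactors.max' hpf := by
    rw [hPdef, Pk]
    rw [List.getD_eq_getElem?_getD, List.getElem?_reverse (by simp [Finset.card_pos.mpr hpf]),
      List.getElem?_eq_getElem (by simp [Nat.sub_lt (Finset.card_pos.mpr hpf) one_pos]),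
      Finset.max'_eq_sorted_last]
    simp
  have hPmem : P ∈ n.primeFactors := hPmax ▸ n.primeFactors.max'_mem hpf
  have hPprime : P.Prime := Nat.prime_of_mem_primeFactors hPmem
  have hPle : ∀ q ∈ n.primeFactors, q ≤ P := fun q hq => hPmax ▸ n.primeFactors.le_max' q hq
  have hrP : r < P := hall P hPmem
  have hPdvd : P ∣ n := Nat.dvd_of_mem_primeFactors hPmem
  -- Q
  set Q := Qk r 1 n with hQdef
  have hQinf : {q : ℕ | q.Prime ∧ r < q ∧ ¬ q ∣ n}.Infinite := by
    apply Set.Infinite.mono (s := {q : ℕ | q.Prime} \ {q : ℕ | q ≤ max r n})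
    · rintro q ⟨hq1, hq2⟩
      simp only [Set.mem_setOf_eq, not_le] at hq1 hq2 ⊢
      refine ⟨hq1, lt_of_le_of_lt (le_max_left _ _) hq2, fun hdvd => ?_⟩
      exact absurd (Nat.le_of_dvd (Nat.pos_of_ne_zero hn0) hdvd)
        (not_le.mpr (lt_of_le_of_lt (le_max_right _ _) hq2))
    · exact Nat.infinite_setOf_prime.diff (Set.finite_le_nat _)
  have hQmem : Q.Prime ∧ r < Q ∧ ¬ Q ∣ n := Nat.nth_mem_of_infinite hQinf 0
  obtain ⟨hQprime, hrQ, hQndvd⟩ := hQmem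
  have hQpos : 0 < Q := hQprime.pos
  -- J
  set N := primorial r with hNdef
  set JJ := J N with hJdef
  have hNpos : 0 < N := primorial_pos r
  have hne : {a : ℕ | ∀ x : ℕ, ∃ y ∈ Finset.Ico x (x + a), Nat.Coprime y N}.Nonempty := by
    refine ⟨N + 2, fun x => ⟨N * (x / N + 1) + 1, ?_, ?_⟩⟩
    · have h1 := Nat.div_add_mod x N
      have h2 := Nat.mod_lt x hNpos
      rw [Finset.mem_Ico]
      have h3 : N * (x / N + 1) = N * (x / N) + N := by ring
      omega
    · rw [Nat.add_comm]
      exact (Nat.coprime_add_mul_left_left 1 N (x / N + 1)).mpr (Nat.coprime_one_left N)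
  have hJmem : ∀ x : ℕ, ∃ y ∈ Finset.Ico x (x + JJ), Nat.Coprime y N := Nat.sInf_mem hne
  have hJ1 : 1 ≤ JJ := by
    by_contra hc
    have hJ0 : JJ = 0 := by omega
    obtain ⟨y, hy, -⟩ := hJmem 0
    rw [hJ0] at hy
    simp at hy
  -- the auxiliary integer y
  obtain ⟨y, hyIco, hycop⟩ := hJmem (P / Q + 1)
  rw [Finset.mem_Ico] at hyIco
  obtain ⟨hylb, hyub⟩ := hyIco
  have hy0 : y ≠ 0 :=
    Nat.one_le_iff_ne_zero.mp (le_trans (Nat.le_add_left 1 (P / Q)) hylb)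
  have hyQP : P < Q * y := by
    have h1 := Nat.div_add_mod P Q
    have h2 := Nat.mod_lt P hQpos
    nlinarith
  have hy_primes : ∀ q ∈ y.primeFactors, r < q := by
    intro q hq
    by_contra hle
    have hqp : q.Prime := Nat.prime_of_mem_primeFactors hq
    have hqN : q ∣ N := by
      rw [hNdef, primorial]
      exact Finset.dvd_prod_of_mem _ (by
        simp only [Finset.mem_filter, Finset.mem_range]
        exact ⟨by omega, hqp⟩)
    have hd : q ∣ Nat.gcd y N := Nat.dvd_gcd (Nat.dvd_of_mem_primeFactors hq) hqN
    have h1 : q ∣ 1 := hycop ▸ hd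
    exact hqp.ne_one (Nat.dvd_one.mp h1)
  -- the competitor m
  set v := n / P with hvdef
  have hnPv : n = P * v := (Nat.mul_div_cancel' hPdvd).symm
  have hv0 : v ≠ 0 := by
    intro hc
    rw [hc, Nat.mul_zero] at hnPv
    exact hn0 hnPv
  set m := v * (Q * y) with hmdef
  have hm0 : m ≠ 0 :=
    Nat.mul_ne_zero hv0 (Nat.mul_ne_zero hQprime.ne_zero hy0)
  have hmn : n < m := by
    rw [hnPv, hmdef, Nat.mul_comm P v]
    exact mul_lt_mul_of_pos_left hyQP (Nat.pos_of_ne_zero hv0)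
  have hmall : ∀ q ∈ m.primeFactors, r < q := by
    intro q hq
    have hqp : q.Prime := Nat.prime_of_mem_primeFactors hq
    have hqm : q ∣ m := Nat.dvd_of_mem_primeFactors hq
    rcases (Nat.Prime.dvd_mul hqp).mp hqm with hqv | hqQy
    · exact hall q (Nat.mem_primeFactors.mpr ⟨hqp, hqv.trans (Nat.div_dvd_of_dvd hPdvd), hn0⟩)
    · rcases (Nat.Prime.dvd_mul hqp).mp hqQy with hqQ | hqy
      · rwa [(Nat.prime_dvd_prime_iff_eq hqp hQprime).mp hqQ]
      · exact hy_primes q (Nat.mem_primeFactors.mpr ⟨hqp, hqy, hy0⟩)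
  have hSm : 0 < S r m := S_pos hmall
  have hlt : S r n < S r m := hmin m hmn hSm
  -- move to the reals
  have hSn_eq := S_real (r := r) hn0 hall
  have hSm_eq := S_real (r := r) hm0 hmall
  set A := ∏ q ∈ n.primeFactors.erase P, (1 - (r : ℝ) / q) with hAdef
  have hfac_pos : ∀ q ∈ n.primeFactors, (0:ℝ) < 1 - (r:ℝ)/q := by
    intro q hq
    have hrq := hall q hq
    have hq0 : (0:ℝ) < q := by exact_mod_cast (Nat.prime_of_mem_primeFactors hq).pos
    rw [sub_pos, div_lt_one hq0]
    exact_mod_cast hrq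
  have hApos : 0 < A := Finset.prod_pos fun q hq => hfac_pos q (Finset.mem_of_mem_erase hq)
  -- T ⊆ primeFactors m
  have hTsub : insert Q (n.primeFactors.erase P) ⊆ m.primeFactors := by
    intro q hq
    rcases Finset.mem_insert.mp hq with rfl | hq'
    · exact Nat.mem_primeFactors.mpr ⟨hQprime, Dvd.dvd.mul_left (Dvd.intro y rfl) v, hm0⟩
    · obtain ⟨hqne, hqmem⟩ := Finset.mem_erase.mp hq'
      have hqp := Nat.prime_of_mem_primeFactors hqmem
      have hqn : q ∣ n := Nat.dvd_of_mem_primeFactors hqmem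
      have hqv : q ∣ v := by
        rcases (Nat.Prime.dvd_mul hqp).mp (hnPv ▸ hqn) with hqP | hqv
        · exact absurd ((Nat.prime_dvd_prime_iff_eq hqp hPprime).mp hqP) hqne
        · exact hqv
      exact Nat.mem_primeFactors.mpr ⟨hqp, hqv.trans (Dvd.intro (Q*y) rfl), hm0⟩
  have hQnotmem : Q ∉ n.primeFactors.erase P := fun hc =>
    hQndvd (Nat.dvd_of_mem_primeFactors (Finset.mem_of_mem_erase hc))
  have hmfac_pos : ∀ q ∈ m.primeFactors, (0:ℝ) < 1 - (r:ℝ)/q := by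
    intro q hq
    have hrq := hmall q hq
    have hq0 : (0:ℝ) < q := by exact_mod_cast (Nat.prime_of_mem_primeFactors hq).pos
    rw [sub_pos, div_lt_one hq0]
    exact_mod_cast hrq
  have hprod_le : ∏ q ∈ m.primeFactors, (1 - (r:ℝ)/q) ≤ (1 - (r:ℝ)/Q) * A := by
    have hsplit := Finset.prod_sdiff (f := fun q : ℕ => (1 - (r:ℝ)/q)) hTsub
    have hT : ∏ q ∈ insert Q (n.primeFactors.erase P), (1 - (r:ℝ)/q) = (1 - (r:ℝ)/Q) * A :=
      Finset.prod_insert hQnotmem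
    calc ∏ q ∈ m.primeFactors, (1 - (r:ℝ)/q)
        = (∏ q ∈ m.primeFactors \ insert Q (n.primeFactors.erase P), (1 - (r:ℝ)/q)) *
          ((1 - (r:ℝ)/Q) * A) := by rw [← hT, hsplit]
      _ ≤ 1 * ((1 - (r:ℝ)/Q) * A) := by
          apply mul_le_mul_of_nonneg_right
          · apply Finset.prod_le_one
            · intro q hq
              exact le_of_lt (hmfac_pos q (Finset.mem_sdiff.mp hq).1)
            · intro q hq
              have hq0 : (0:ℝ) ≤ (r:ℝ)/q := by positivity
              linarith
          · have hQr : (0:ℝ) < 1 - (r:ℝ)/Q := by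
              rw [sub_pos, div_lt_one (by exact_mod_cast hQpos)]
              exact_mod_cast hrQ
            positivity
      _ = (1 - (r:ℝ)/Q) * A := one_mul _
  have hprodn : ∏ q ∈ n.primeFactors, (1 - (r:ℝ)/q) = (1 - (r:ℝ)/P) * A :=
    (Finset.mul_prod_erase _ _ hPmem).symm
  -- main inequality chain
  have hvR : (0:ℝ) < (v:ℝ) := by exact_mod_cast Nat.pos_of_ne_zero hv0
  have hstep : (n:ℝ) * ((1 - (r:ℝ)/P) * A) < (m:ℝ) * ((1 - (r:ℝ)/Q) * A) := by
    calc (n:ℝ) * ((1 - (r:ℝ)/P) * A) = (S r n : ℝ) := by rw [hSn_eq, hprodn]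
      _ < (S r m : ℝ) := by exact_mod_cast hlt
      _ = (m:ℝ) * ∏ q ∈ m.primeFactors, (1 - (r:ℝ)/q) := hSm_eq
      _ ≤ (m:ℝ) * ((1 - (r:ℝ)/Q) * A) := by
          apply mul_le_mul_of_nonneg_left hprod_le (by positivity)
  have hcastn : (n:ℝ) = (P:ℝ) * v := by exact_mod_cast hnPv
  have hcastm : (m:ℝ) = (v:ℝ) * ((Q:ℝ) * y) := by exact_mod_cast hmdef
  have h3 : (P:ℝ) * (1 - (r:ℝ)/P) < (Q:ℝ) * y * (1 - (r:ℝ)/Q) := by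
    have hrw : (n:ℝ) * ((1 - (r:ℝ)/P) * A) = ((P:ℝ) * (1 - (r:ℝ)/P)) * (v * A) := by
      rw [hcastn]; ring
    have hrw2 : (m:ℝ) * ((1 - (r:ℝ)/Q) * A) = ((Q:ℝ) * y * (1 - (r:ℝ)/Q)) * (v * A) := by
      rw [hcastm]; ring
    rw [hrw, hrw2] at hstep
    exact (mul_lt_mul_iff_of_pos_right (by positivity : (0:ℝ) < (v:ℝ) * A)).mp hstep
  have hP0 : (0:ℝ) < P := by exact_mod_cast hPprime.pos
  have hQ0 : (0:ℝ) < Q := by exact_mod_cast hQpos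
  have hPc : (P:ℝ) * (1 - (r:ℝ)/P) = (P:ℝ) - r := by field_simp
  have hQc : (Q:ℝ) * y * (1 - (r:ℝ)/Q) = (y:ℝ) * ((Q:ℝ) - r) := by field_simp
  rw [hPc, hQc] at h3
  have hyle : (y:ℝ) ≤ (P:ℝ)/Q + JJ := by
    have h1 : y ≤ P / Q + JJ := by omega
    have h2 : ((P / Q : ℕ) : ℝ) ≤ (P:ℝ)/Q := Nat.cast_div_le
    calc (y:ℝ) ≤ ((P/Q + JJ : ℕ):ℝ) := by exact_mod_cast h1
      _ = ((P/Q : ℕ):ℝ) + (JJ:ℝ) := by push_cast; ring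
      _ ≤ (P:ℝ)/Q + JJ := by linarith
  have hQr1 : (0:ℝ) ≤ (Q:ℝ) - r := by
    rw [sub_nonneg]; exact_mod_cast le_of_lt hrQ
  have h2 : (P:ℝ) - r < ((P:ℝ)/Q + JJ) * ((Q:ℝ) - r) :=
    lt_of_lt_of_le h3 (mul_le_mul_of_nonneg_right hyle hQr1)
  have hrR : (0:ℝ) < r := by exact_mod_cast hr
  have h4 : ((P:ℝ) - r) * Q < ((P:ℝ) + JJ * Q) * ((Q:ℝ) - r) := by
    have hmul := mul_lt_mul_of_pos_right h2 hQ0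
    have hPQ : (P:ℝ)/Q * Q = P := div_mul_cancel₀ _ (ne_of_gt hQ0)
    have hexp : (((P:ℝ)/Q + JJ) * ((Q:ℝ) - r)) * Q = ((P:ℝ)/Q*Q + (JJ:ℝ)*Q) * ((Q:ℝ) - r) := by
      ring
    rw [hexp, hPQ] at hmul
    exact hmul
  have e1 : ((P:ℝ) - r) * Q = (P:ℝ)*Q - (r:ℝ)*Q := by ring
  have e2 : ((P:ℝ) + (JJ:ℝ) * Q) * ((Q:ℝ) - r)
      = (P:ℝ)*Q - (P:ℝ)*r + ((JJ:ℝ)*Q*Q - (JJ:ℝ)*Q*r) := by ring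
  rw [e1, e2] at h4
  have h5 : (P:ℝ) * r < (Q:ℝ) * r + (JJ:ℝ)*Q*((Q:ℝ) - r) := by
    have e3 : (Q:ℝ)*r + (JJ:ℝ)*Q*((Q:ℝ) - r) = (r:ℝ)*Q + ((JJ:ℝ)*Q*Q - (JJ:ℝ)*Q*r) := by ring
    rw [e3]
    linarith
  have heq2 : (Q:ℝ) * (1 - (JJ:ℝ) + (JJ:ℝ)/r * Q) * r = (Q:ℝ)*r + (JJ:ℝ)*Q*((Q:ℝ)-r) := by
    have hJr : (JJ:ℝ)/r * r = JJ := div_mul_cancel₀ _ (ne_of_gt hrR)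
    have hexp : (Q:ℝ) * (1 - (JJ:ℝ) + (JJ:ℝ)/r * Q) * r
        = (Q:ℝ)*r - (JJ:ℝ)*((Q:ℝ)*r) + ((JJ:ℝ)/r*r)*((Q:ℝ)*Q) := by ring
    rw [hexp, hJr]
    ring
  rw [← mul_lt_mul_iff_of_pos_right hrR, heq2]
  exact h5
end

section
/- Let r be a positive integer and n a sparsely Schemmel totient number of order r. Then R(n) < (J_r/r)·Q_1(n)·(Q_1(n) − r), where R(n) = n divided by the product of its distinct prime factors, Q_1(n) is the smallest prime greater than r not dividing n, and J_r = J(r#). -/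
lemma rad_pos (n : ℕ) : 0 < ∏ q ∈ n.primeFactors, q :=
  Finset.prod_pos fun _ hq => Nat.pos_of_mem_primeFactors hq

lemma prod_pow_mul_rad {n : ℕ} (hn : n ≠ 0) :
    (∏ q ∈ n.primeFactors, q ^ (n.factorization q - 1)) * (∏ q ∈ n.primeFactors, q) = n := by
  rw [← Finset.prod_mul_distrib]
  have h1 : ∀ q ∈ n.primeFactors, q ^ (n.factorization q - 1) * q = q ^ n.factorization q := by
    intro q hq
    have hp := Nat.prime_of_mem_primeFactors hq
    have hd : q ∣ n := Nat.dvd_of_mem_primeFactors hq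
    have hpos : 1 ≤ n.factorization q := hp.factorization_pos_of_dvd hn hd
    rw [← pow_succ, Nat.sub_add_cancel hpos]
  rw [Finset.prod_congr rfl h1]
  rw [← Nat.support_factorization]
  exact Nat.factorization_prod_pow_eq_self hn

lemma Rn_eq {n : ℕ} (hn : n ≠ 0) :
    Rn n = ∏ q ∈ n.primeFactors, q ^ (n.factorization q - 1) := by
  rw [Rn]
  exact Nat.div_eq_of_eq_mul_left (rad_pos n) (prod_pow_mul_rad hn).symm

lemma Rn_mul_rad {n : ℕ} (hn : n ≠ 0) : Rn n * (∏ q ∈ n.primeFactors, q) = n := by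
  rw [Rn_eq hn]; exact prod_pow_mul_rad hn

lemma S_eq (r : ℕ) {n : ℕ} (hn : n ≠ 0) :
    S r n = Rn n * ∏ q ∈ n.primeFactors, (q - r) := by
  rw [S, Finset.prod_mul_distrib, Rn_eq hn]

lemma S_pos_iff (r n : ℕ) : 0 < S r n ↔ ∀ q ∈ n.primeFactors, r < q := by
  rw [S, CanonicallyOrderedAdd.prod_pos]
  refine forall_congr' fun q => imp_congr_right fun hq => ?_
  have hqp : 0 < q := Nat.pos_of_mem_primeFactors hq
  constructor
  · intro hpos
    rcases Nat.eq_zero_or_pos (q - r) with h0 | h0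
    · rw [h0, mul_zero] at hpos; exact absurd hpos (lt_irrefl 0)
    · omega
  · intro hlt
    exact Nat.mul_pos (pow_pos hqp _) (by omega)

theorem stmt12 (r n : ℕ) (hr : 0 < r) (h : SST r n) :
    (Rn n : ℝ) < ((J (primorial r) : ℝ) / r) * (Qk r 1 n : ℝ) * ((Qk r 1 n : ℝ) - r) := by
  -- n ≠ 0
  have hn0 : n ≠ 0 := by
    rintro rfl
    have h1 : S r 1 = 1 := by simp [S]
    have h0 : S r 0 = 1 := by simp [S]
    have := h.2 1 Nat.one_pos (by rw [h1]; exact Nat.one_pos)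
    rw [h0, h1] at this
    exact lt_irrefl 1 this
  -- the prime Q
  have hinf : {q : ℕ | q.Prime ∧ r < q ∧ ¬ q ∣ n}.Infinite := by
    refine ((Nat.infinite_setOf_prime.diff (Set.finite_le_nat (max r n))).mono ?_)
    rintro q ⟨hq, hle⟩
    simp only [Set.mem_setOf_eq, not_le] at hle ⊢
    refine ⟨hq, lt_of_le_of_lt (le_max_left r n) hle, fun hdvd => ?_⟩
    exact absurd (Nat.le_of_dvd (Nat.pos_of_ne_zero hn0) hdvd)
      (not_le.2 (lt_of_le_of_lt (le_max_right r n) hle))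
  have hQ : (Qk r 1 n).Prime ∧ r < Qk r 1 n ∧ ¬ Qk r 1 n ∣ n := Nat.nth_mem_of_infinite hinf 0
  set Q := Qk r 1 n with hQdef
  obtain ⟨hQp, hrQ, hQnd⟩ := hQ
  have hQpos : 0 < Q := hQp.pos
  -- Jacobsthal property
  set N := primorial r with hNdef
  have hN0 : 0 < N := primorial_pos r
  have hmemJ : (2 * N + 2) ∈ {a : ℕ | ∀ x : ℕ, ∃ y ∈ Finset.Ico x (x + a), Nat.Coprime y N} := by
    intro x
    refine ⟨1 + (x / N + 1) * N, ?_, ?_⟩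
    · rw [Finset.mem_Ico]
      have hm : N * (x / N) + x % N = x := Nat.div_add_mod x N
      have hlt : x % N < N := Nat.mod_lt x hN0
      have hexp : (x / N + 1) * N = N * (x / N) + N := by ring
      rw [hexp]
      omega
    · exact (Nat.coprime_add_mul_right_left 1 N (x / N + 1)).mpr (Nat.coprime_one_left N)
  have hJmem : J N ∈ {a : ℕ | ∀ x : ℕ, ∃ y ∈ Finset.Ico x (x + a), Nat.Coprime y N} := by
    rw [J]
    exact Nat.sInf_mem ⟨2 * N + 2, hmemJ⟩
  -- contradiction setup
  by_contra hcon
  push_neg at hcon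
  set R := Rn n with hRdef
  have hr' : (0 : ℝ) < r := by exact_mod_cast hr
  have key : (J N : ℝ) * Q * ((Q : ℝ) - r) ≤ (r : ℝ) * R := by
    have h2 := mul_le_mul_of_nonneg_right hcon (le_of_lt hr')
    calc (J N : ℝ) * Q * ((Q : ℝ) - r) = (J N : ℝ) / r * Q * ((Q : ℝ) - r) * r := by
          field_simp
      _ ≤ R * r := h2
      _ = (r : ℝ) * R := mul_comm _ _
  -- choose t
  obtain ⟨t, htmem, htcop⟩ := hJmem (R / Q + 1)
  rw [Finset.mem_Ico] at htmem
  obtain ⟨ht1, ht2⟩ := htmem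
  have hdivlt : R / Q < t := lt_of_lt_of_le (Nat.lt_succ_self _) ht1
  have ht0 : t ≠ 0 := Nat.pos_iff_ne_zero.mp (lt_of_le_of_lt (Nat.zero_le _) hdivlt)
  have htQ : R < t * Q := (Nat.div_lt_iff_lt_mul hQpos).mp hdivlt
  -- t * (Q - r) ≤ R
  have hQR : (0 : ℝ) < Q := by exact_mod_cast hQpos
  have hrQR : (r : ℝ) ≤ Q := by exact_mod_cast hrQ.le
  have htR : (t : ℝ) ≤ (R : ℝ) / Q + J N := by
    have h1 : t ≤ R / Q + J N := by
      rw [Nat.add_right_comm] at ht2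
      exact Nat.lt_succ_iff.mp ht2
    calc (t : ℝ) ≤ ((R / Q + J N : ℕ) : ℝ) := by exact_mod_cast h1
      _ = ((R / Q : ℕ) : ℝ) + J N := by push_cast; ring
      _ ≤ (R : ℝ) / Q + J N := add_le_add_left Nat.cast_div_le _
  have hfin : (t : ℝ) * ((Q : ℝ) - r) ≤ (R : ℝ) := by
    refine le_of_mul_le_mul_right ?_ hQR
    have h1 : (t : ℝ) * Q ≤ R + J N * Q := by
      have h2 := mul_le_mul_of_nonneg_right htR hQR.le
      rw [add_mul, div_mul_cancel₀ _ (ne_of_gt hQR)] at h2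
      linarith
    nlinarith [mul_le_mul_of_nonneg_right h1 (sub_nonneg.2 hrQR), key]
  have htQr : t * (Q - r) ≤ R := by
    have h2 : ((t * (Q - r) : ℕ) : ℝ) ≤ (R : ℝ) := by
      push_cast [Nat.cast_sub hrQ.le]
      exact hfin
    exact_mod_cast h2
  -- primes of t are > r
  have htprimes : ∀ q ∈ t.primeFactors, r < q := by
    intro q hq
    have hqp := Nat.prime_of_mem_primeFactors hq
    by_contra hle
    push_neg at hle
    have hqN : q ∣ N := by
      rw [hNdef, primorial]
      exact Finset.dvd_prod_of_mem _
        (Finset.mem_filter.mpr ⟨Finset.mem_range.mpr (Nat.lt_succ_of_le hle), hqp⟩)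
    have hq1 : q ∣ 1 := htcop ▸ Nat.dvd_gcd (Nat.dvd_of_mem_primeFactors hq) hqN
    exact hqp.one_lt.ne' (Nat.eq_one_of_dvd_one hq1)
  -- build m
  set A := n.primeFactors with hA
  set rad := ∏ q ∈ A, q with hrad
  have hrad0 : 0 < rad := rad_pos n
  have hApr : ∀ q ∈ A, r < q := (S_pos_iff r n).mp h.1
  have hQA : Q ∉ A := fun hmem => hQnd (Nat.dvd_of_mem_primeFactors hmem)
  set m := t * (Q * rad) with hm
  have hm0 : m ≠ 0 := by positivity
  have hQrad0 : Q * rad ≠ 0 := by positivity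
  -- prime factors of m
  have hradpf : rad.primeFactors = A := Nat.primeFactors_prod fun q hq =>
    Nat.prime_of_mem_primeFactors hq
  have hmfactors : m.primeFactors = insert Q A ∪ (t.primeFactors \ insert Q A) := by
    rw [hm, Nat.primeFactors_mul ht0 hQrad0,
      Nat.primeFactors_mul (ne_of_gt hQpos) (ne_of_gt hrad0), hQp.primeFactors, hradpf,
      ← Finset.insert_eq, Finset.union_comm, Finset.union_sdiff_self_eq_union]
  -- m > n
  have hnm : n < m := by
    calc n = R * rad := (Rn_mul_rad hn0).symm
      _ < (t * Q) * rad := by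
          exact Nat.mul_lt_mul_of_lt_of_le htQ (le_refl rad) hrad0
      _ = m := by rw [hm]; ring
  -- S r m > 0
  have hSm : 0 < S r m := by
    rw [S_pos_iff]
    intro q hq
    rw [hmfactors, Finset.mem_union] at hq
    rcases hq with hq | hq
    · rcases Finset.mem_insert.mp hq with rfl | hq
      · exact hrQ
      · exact hApr q hq
    · exact htprimes q (Finset.mem_sdiff.mp hq).1
  -- upper bound for S r m
  set C := t.primeFactors \ insert Q A with hC
  set PC := ∏ q ∈ C, q with hPC
  have hPCdvd : PC ∣ t := by
    refine Finset.prod_primes_dvd t (fun q hq => ?_) (fun q hq => ?_)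
    · exact (Nat.prime_of_mem_primeFactors (Finset.mem_sdiff.mp hq).1).prime
    · exact Nat.dvd_of_mem_primeFactors (Finset.mem_sdiff.mp hq).1
  set u := t / PC with hu
  have huPC : u * PC = t := Nat.div_mul_cancel hPCdvd
  have hdisj : Disjoint (insert Q A) C := Finset.disjoint_sdiff
  have hradm : (∏ q ∈ m.primeFactors, q) = (Q * rad) * PC := by
    rw [hmfactors, Finset.prod_union hdisj, Finset.prod_insert hQA, hPC]
  have hRnm : Rn m = u := by
    rw [Rn, hradm]
    have : m = u * ((Q * rad) * PC) := by rw [hm, ← huPC]; ring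
    rw [this, Nat.mul_div_cancel]
    have hPC0 : 0 < PC := Finset.prod_pos fun q hq =>
      Nat.pos_of_mem_primeFactors (Finset.mem_sdiff.mp hq).1
    positivity
  have hSmle : S r m ≤ t * ((Q - r) * ∏ q ∈ A, (q - r)) := by
    rw [S_eq r hm0, hRnm, hmfactors, Finset.prod_union hdisj, Finset.prod_insert hQA]
    have hCle : (∏ q ∈ C, (q - r)) ≤ PC :=
      Finset.prod_le_prod (fun q _ => Nat.zero_le _) (fun q _ => Nat.sub_le q r)
    calc u * (((Q - r) * ∏ q ∈ A, (q - r)) * ∏ q ∈ C, (q - r))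
        ≤ u * (((Q - r) * ∏ q ∈ A, (q - r)) * PC) :=
          Nat.mul_le_mul_left _ (Nat.mul_le_mul_left _ hCle)
      _ = (u * PC) * ((Q - r) * ∏ q ∈ A, (q - r)) := by ring
      _ = t * ((Q - r) * ∏ q ∈ A, (q - r)) := by rw [huPC]
  -- contradiction
  have hSn : S r n = R * ∏ q ∈ A, (q - r) := S_eq r hn0
  have hlt := h.2 m hnm hSm
  have : S r m ≤ S r n := by
    calc S r m ≤ t * ((Q - r) * ∏ q ∈ A, (q - r)) := hSmle
      _ = (t * (Q - r)) * ∏ q ∈ A, (q - r) := by ring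
      _ ≤ R * ∏ q ∈ A, (q - r) := Nat.mul_le_mul_right _ htQr
      _ = S r n := hSn.symm
  omega
end
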